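/- arXiv:1903.02254 — 4 statements merged into one kernel-verified Lean document; each statement's English description precedes it below -/
import Mathlib

section
/- Every *-structure on the Radford algebra H satisfies g* = g. -/
open TensorProduct

noncomputable section

def qBinom (q : ℂ) : ℕ → ℕ → ℂ
  | _, 0 => 1
  | 0, _ + 1 => 0
  | m + 1, k + 1 => qBinom q m k + q ^ (k + 1) * qBinom q m (k + 1)

lemma qBinom_zero (q : ℂ) (m : ℕ) : qBinom q m 0 = 1 := by cases m <;> rfl

lemma qBinom_of_lt (q : ℂ) {m k : ℕ} (h : m < k) : qBinom q m k = 0 := by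
  induction m generalizing k with
  | zero => cases k with
    | zero => omega
    | succ k => rfl
  | succ m ih =>
    cases k with
    | zero => omega
    | succ k =>
      show qBinom q m k + q ^ (k+1) * qBinom q m (k+1) = 0
      rw [ih (by omega), ih (by omega)]; ring

lemma qBinom_self (q : ℂ) (m : ℕ) : qBinom q m m = 1 := by
  induction m with
  | zero => rfl
  | succ m ih =>
    show qBinom q m m + q ^ (m+1) * qBinom q m (m+1) = 1
    rw [ih, qBinom_of_lt q (by omega)]; ring

lemma qBinom_one_right (q : ℂ) (m : ℕ) : qBinom q m 1 = ∑ t ∈ Finset.range m, q ^ t := by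
  induction m with
  | zero => simp [qBinom_of_lt q (by omega : 0 < 1)]
  | succ m ih =>
    show qBinom q m 0 + q ^ (0+1) * qBinom q m 1 = _
    rw [qBinom_zero, ih, Finset.sum_range_succ', Finset.mul_sum]
    simp [pow_succ']
    ring

lemma qpow_comm {A : Type*} [Ring A] [Algebra ℂ A] {a b : A} {q : ℂ}
    (h : b * a = q • (a * b)) (k : ℕ) : b * a ^ k = q ^ k • (a ^ k * b) := by
  induction k with
  | zero => simp
  | succ k ih =>
    rw [pow_succ', ← mul_assoc, h, smul_mul_assoc, mul_assoc, ih, mul_smul_comm, smul_smul,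
      ← pow_succ', ← mul_assoc]

lemma qBinom_thm {A : Type*} [Ring A] [Algebra ℂ A] {a b : A} {q : ℂ}
    (h : b * a = q • (a * b)) (m : ℕ) :
    (a + b) ^ m = ∑ k ∈ Finset.range (m+1), qBinom q m k • (a ^ k * b ^ (m - k)) := by
  induction m with
  | zero => simp [qBinom_zero]
  | succ m ih =>
    rw [pow_succ', ih, Finset.mul_sum]
    have step : ∀ k ∈ Finset.range (m+1),
        (a + b) * (qBinom q m k • (a ^ k * b ^ (m - k)))
        = qBinom q m k • (a ^ (k+1) * b ^ (m - k))
          + (q ^ k * qBinom q m k) • (a ^ k * b ^ (m + 1 - k)) := by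
      intro k hk
      rw [Finset.mem_range] at hk
      have hmk : m + 1 - k = (m - k) + 1 := by omega
      rw [add_mul, mul_smul_comm, mul_smul_comm, ← mul_assoc, ← pow_succ',
        ← mul_assoc, qpow_comm h, smul_mul_assoc, smul_smul, hmk, mul_assoc,
        ← pow_succ']
      rw [mul_comm (qBinom q m k) (q ^ k)]
    rw [Finset.sum_congr rfl step, Finset.sum_add_distrib]
    -- now: ∑ k in range (m+1), qBinom q m k • (a^(k+1) * b^(m-k))
    --    + ∑ k in range (m+1), (q^k * qBinom q m k) • (a^k * b^(m+1-k))
    --  = ∑ k in range (m+2), qBinom q (m+1) k • (a^k * b^(m+1-k))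
    rw [Finset.sum_range_succ' (fun k => qBinom q (m+1) k • (a ^ k * b ^ (m + 1 - k))) (m+1)]
    have e1 : ∀ k ∈ Finset.range (m+1),
        qBinom q (m+1) (k+1) • (a ^ (k+1) * b ^ (m + 1 - (k+1)))
        = qBinom q m k • (a ^ (k+1) * b ^ (m - k))
          + (q ^ (k+1) * qBinom q m (k+1)) • (a ^ (k+1) * b ^ (m - k)) := by
      intro k hk
      have : m + 1 - (k + 1) = m - k := by omega
      rw [this]
      show (qBinom q m k + q ^ (k + 1) * qBinom q m (k + 1)) • _ = _
      rw [add_smul]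
    rw [Finset.sum_congr rfl e1, Finset.sum_add_distrib]
    have e2 : ∑ k ∈ Finset.range (m+1), (q ^ (k+1) * qBinom q m (k+1)) • (a ^ (k+1) * b ^ (m - k))
        = ∑ k ∈ Finset.range m, (q ^ (k+1) * qBinom q m (k+1)) • (a ^ (k+1) * b ^ (m - k)) := by
      rw [Finset.sum_range_succ, qBinom_of_lt q (by omega : m < m + 1)]
      simp
    have e3 : ∑ k ∈ Finset.range (m+1), (q ^ k * qBinom q m k) • (a ^ k * b ^ (m + 1 - k))
        = (∑ k ∈ Finset.range m, (q ^ (k+1) * qBinom q m (k+1)) • (a ^ (k+1) * b ^ (m - k)))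
          + qBinom q m 0 • (a ^ 0 * b ^ (m+1)) := by
      rw [Finset.sum_range_succ' (fun k => (q ^ k * qBinom q m k) • (a ^ k * b ^ (m + 1 - k))) m]
      simp [qBinom_zero]
    rw [e2, e3, qBinom_zero, qBinom_zero]
    simp only [pow_zero, one_mul, one_smul]
    abel

/-- The Radford algebra: a Hopf algebra `H` over `ℂ` generated by elements
`g, x, y` subject to the relations `g^n = 1`, `x^n = y^n = 0`, `xg = ω g x`,
`g y = ω y g`, `x y = ω y x`, where `ω` is a root of unity of order `n > 1`,
with the comultiplication, counit and antipode determined by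
`Δ(g) = g ⊗ g`, `ε(g) = 1`, `S(g) = g^(n-1)`,
`Δ(x) = x ⊗ g + 1 ⊗ x`, `ε(x) = 0`, `S(x) = -x g^(n-1)`,
`Δ(y) = y ⊗ g + 1 ⊗ y`, `ε(y) = 0`, `S(y) = -y g^(n-1)`,
and with canonical `ℂ`-basis `{y^r x^s g^l | 0 ≤ r, s, l < n}`. -/
structure RadfordAlgebra (n : ℕ) (ω : ℂ) (H : Type*) [Ring H] [HopfAlgebra ℂ H] where
  g : H
  x : H
  y : H
  hn : 1 < n
  hω : IsPrimitiveRoot ω n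
  g_pow : g ^ n = 1
  x_pow : x ^ n = 0
  y_pow : y ^ n = 0
  rel_xg : x * g = ω • (g * x)
  rel_gy : g * y = ω • (y * g)
  rel_xy : x * y = ω • (y * x)
  comul_g : Coalgebra.comul (R := ℂ) g = g ⊗ₜ[ℂ] g
  counit_g : Coalgebra.counit (R := ℂ) g = 1
  antipode_g : HopfAlgebra.antipode (R := ℂ) g = g ^ (n - 1)
  comul_x : Coalgebra.comul (R := ℂ) x = x ⊗ₜ[ℂ] g + 1 ⊗ₜ[ℂ] x
  counit_x : Coalgebra.counit (R := ℂ) x = 0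
  antipode_x : HopfAlgebra.antipode (R := ℂ) x = -(x * g ^ (n - 1))
  comul_y : Coalgebra.comul (R := ℂ) y = y ⊗ₜ[ℂ] g + 1 ⊗ₜ[ℂ] y
  counit_y : Coalgebra.counit (R := ℂ) y = 0
  antipode_y : HopfAlgebra.antipode (R := ℂ) y = -(y * g ^ (n - 1))
  gen : Algebra.adjoin ℂ ({g, x, y} : Set H) = ⊤
  basis : Module.Basis (Fin n × Fin n × Fin n) ℂ H
  basis_eq : ∀ r s l : Fin n, basis (r, s, l) = y ^ (r : ℕ) * x ^ (s : ℕ) * g ^ (l : ℕ)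

/-- A `*`-structure on a Hopf algebra `H` over `ℂ`: a conjugate-linear map
`* : H → H` such that `(h*)* = h`, `(hl)* = l* h*`,
`Δ(h*) = Σ (h₁)* ⊗ (h₂)*` and `S(S(h*)*) = h` for all `h, l ∈ H`.
(The condition on `Δ` is expressed via the auxiliary additive map `starTensor`
on `H ⊗[ℂ] H` sending `a ⊗ b` to `a* ⊗ b*`, which is uniquely determined by
its two defining properties.) -/
structure HopfStarStructure (H : Type*) [Ring H] [HopfAlgebra ℂ H] where
  star : H → H
  star_add : ∀ a b : H, star (a + b) = star a + star b
  star_smul : ∀ (c : ℂ) (a : H), star (c • a) = (starRingEnd ℂ c) • star a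
  star_star : ∀ a : H, star (star a) = a
  star_mul : ∀ a b : H, star (a * b) = star b * star a
  starTensor : H ⊗[ℂ] H → H ⊗[ℂ] H
  starTensor_add : ∀ u v : H ⊗[ℂ] H, starTensor (u + v) = starTensor u + starTensor v
  starTensor_tmul : ∀ a b : H, starTensor (a ⊗ₜ[ℂ] b) = star a ⊗ₜ[ℂ] star b
  comul_star : ∀ a : H,
    Coalgebra.comul (R := ℂ) (star a) = starTensor (Coalgebra.comul (R := ℂ) a)
  antipode_star : ∀ a : H,
    HopfAlgebra.antipode (R := ℂ) (star (HopfAlgebra.antipode (R := ℂ) (star a))) = a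

/-- Two `*`-structures `*'` and `*''` on a Hopf algebra `H` over `ℂ` are
equivalent if there is a Hopf algebra automorphism `ψ` of `H` such that
`ψ(h^{*'}) = ψ(h)^{*''}` for all `h ∈ H`. -/
def HopfStarStructure.Equivalent {H : Type*} [Ring H] [HopfAlgebra ℂ H]
    (s₁ s₂ : HopfStarStructure H) : Prop :=
  ∃ ψ : H ≃ₐc[ℂ] H, ∀ h : H, ψ (s₁.star h) = s₂.star (ψ h)


namespace RadfordAlgebra

variable {n : ℕ} {ω : ℂ} {H : Type*} [Ring H] [HopfAlgebra ℂ H]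

lemma omega_pow_n (R : RadfordAlgebra n ω H) : ω ^ n = 1 := R.hω.pow_eq_one

lemma g_mul_ypow (R : RadfordAlgebra n ω H) (b : ℕ) : R.g * R.y ^ b = ω ^ b • (R.y ^ b * R.g) := by
  induction b with
  | zero => simp
  | succ b ih =>
    rw [pow_succ, ← mul_assoc, ih, smul_mul_assoc, mul_assoc, R.rel_gy, mul_smul_comm,
      smul_smul, ← mul_assoc, ← pow_succ, ← pow_succ]

lemma gpow_mul_ypow (R : RadfordAlgebra n ω H) (a b : ℕ) : R.g ^ a * R.y ^ b = ω ^ (a * b) • (R.y ^ b * R.g ^ a) := by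
  induction a with
  | zero => simp
  | succ a ih =>
    rw [pow_succ, mul_assoc, R.g_mul_ypow, mul_smul_comm, ← mul_assoc, ih, smul_mul_assoc,
      smul_smul, ← pow_add, mul_assoc, ← pow_succ]
    congr 2
    ring

lemma xpow_mul_g (R : RadfordAlgebra n ω H) (b : ℕ) : R.x ^ b * R.g = ω ^ b • (R.g * R.x ^ b) := by
  induction b with
  | zero => simp
  | succ b ih =>
    rw [pow_succ', mul_assoc, ih, mul_smul_comm, ← mul_assoc, R.rel_xg, smul_mul_assoc,
      smul_smul, mul_assoc, ← pow_succ', ← pow_succ]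

lemma xpow_mul_gpow (R : RadfordAlgebra n ω H) (a b : ℕ) : R.x ^ b * R.g ^ a = ω ^ (a * b) • (R.g ^ a * R.x ^ b) := by
  induction a with
  | zero => simp
  | succ a ih =>
    rw [pow_succ, ← mul_assoc, ih, smul_mul_assoc, mul_assoc, R.xpow_mul_g, mul_smul_comm,
      smul_smul, ← mul_assoc, ← pow_succ, ← pow_add]
    congr 2
    ring

lemma gpow_mul_xpow (R : RadfordAlgebra n ω H) (a b : ℕ) :
    R.g ^ a * R.x ^ b = ω ^ ((n - 1) * (a * b)) • (R.x ^ b * R.g ^ a) := by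
  rw [R.xpow_mul_gpow, smul_smul, ← pow_add]
  have h : (n - 1) * (a * b) + a * b = n * (a * b) := by
    cases n with
    | zero => exact absurd R.hn (by omega)
    | succ k => rw [Nat.succ_sub_one, Nat.succ_mul]
  rw [h, pow_mul, R.omega_pow_n, one_pow, one_smul]

lemma second_factor (R : RadfordAlgebra n ω H) (i j p s l : ℕ) :
    (R.y ^ i * R.g ^ (p - i)) * (R.g ^ j * R.x ^ (s - j)) * R.g ^ l
    = ω ^ ((n - 1) * ((p - i + j) * (s - j))) •
        (R.y ^ i * R.x ^ (s - j) * R.g ^ (p - i + j + l)) := by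
  rw [mul_assoc (R.y ^ i), ← mul_assoc (R.g ^ (p - i)), ← pow_add, R.gpow_mul_xpow,
    mul_smul_comm, smul_mul_assoc]
  congr 1
  rw [mul_assoc, mul_assoc, mul_assoc, ← pow_add]

lemma comul_mono (R : RadfordAlgebra n ω H) (p s l : ℕ) :
    Coalgebra.comul (R := ℂ) (R.y ^ p * R.x ^ s * R.g ^ l) =
    ∑ i ∈ Finset.range (p + 1), ∑ j ∈ Finset.range (s + 1),
      (ω ^ ((n - 1) * ((p - i + j) * (s - j))) * qBinom ω p i * qBinom ω s j) •
        ((R.y ^ (p - i) * R.x ^ j * R.g ^ l) ⊗ₜ[ℂ]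
         (R.y ^ i * R.x ^ (s - j) * R.g ^ (p - i + j + l))) := by
  have hy : (R.y ⊗ₜ[ℂ] R.g) * ((1 : H) ⊗ₜ[ℂ] R.y)
      = ω • (((1 : H) ⊗ₜ[ℂ] R.y) * (R.y ⊗ₜ[ℂ] R.g)) := by
    rw [Algebra.TensorProduct.tmul_mul_tmul, Algebra.TensorProduct.tmul_mul_tmul,
      R.rel_gy, tmul_smul, mul_one, one_mul]
  have hx : ((1 : H) ⊗ₜ[ℂ] R.x) * (R.x ⊗ₜ[ℂ] R.g)
      = ω • ((R.x ⊗ₜ[ℂ] R.g) * ((1 : H) ⊗ₜ[ℂ] R.x)) := by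
    rw [Algebra.TensorProduct.tmul_mul_tmul, Algebra.TensorProduct.tmul_mul_tmul,
      R.rel_xg, tmul_smul, mul_one, one_mul]
  rw [Bialgebra.comul_mul, Bialgebra.comul_mul, Bialgebra.comul_pow, Bialgebra.comul_pow,
    Bialgebra.comul_pow, R.comul_x, R.comul_y, R.comul_g]
  rw [show R.y ⊗ₜ[ℂ] R.g + (1:H) ⊗ₜ[ℂ] R.y = (1:H) ⊗ₜ[ℂ] R.y + R.y ⊗ₜ[ℂ] R.g from add_comm _ _]
  rw [qBinom_thm hy p, qBinom_thm hx s, Finset.sum_mul_sum, Finset.sum_mul]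
  refine Finset.sum_congr rfl fun i hi => ?_
  rw [Finset.sum_mul]
  refine Finset.sum_congr rfl fun j hj => ?_
  simp only [smul_mul_assoc, mul_smul_comm, smul_smul]
  simp only [Algebra.TensorProduct.tmul_pow, one_pow,
    Algebra.TensorProduct.tmul_mul_tmul, one_mul, mul_one]
  rw [R.second_factor, tmul_smul, smul_smul]
  congr 1
  ring

end RadfordAlgebra

namespace RadfordAlgebra

variable {n : ℕ} {ω : ℂ} {H : Type*} [Ring H] [HopfAlgebra ℂ H]

lemma npos (R : RadfordAlgebra n ω H) : 0 < n := lt_trans one_pos R.hn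

lemma g_pow_mod (R : RadfordAlgebra n ω H) (m : ℕ) : R.g ^ m = R.g ^ (m % n) := by
  conv_lhs => rw [← Nat.mod_add_div m n]
  rw [pow_add, pow_mul, R.g_pow, one_pow, mul_one]

lemma mono_eq_basis (R : RadfordAlgebra n ω H) (a b m : ℕ) (ha : a < n) (hb : b < n) :
    R.y ^ a * R.x ^ b * R.g ^ m
      = R.basis (⟨a, ha⟩, ⟨b, hb⟩, ⟨m % n, Nat.mod_lt m R.npos⟩) := by
  rw [R.basis_eq, ← R.g_pow_mod]

lemma repr_comul_basis (R : RadfordAlgebra n ω H) (p q l r1 s1 l1 r2 s2 l2 : Fin n) :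
    (R.basis.tensorProduct R.basis).repr
        (Coalgebra.comul (R := ℂ) (R.basis (p, q, l))) ((r1, s1, l1), (r2, s2, l2)) =
    if (p : ℕ) = (r1 : ℕ) + (r2 : ℕ) ∧ (q : ℕ) = (s1 : ℕ) + (s2 : ℕ) ∧ l = l1
        ∧ (l2 : ℕ) = ((r1 : ℕ) + (s1 : ℕ) + (l1 : ℕ)) % n
    then ω ^ ((n - 1) * (((r1 : ℕ) + (s1 : ℕ)) * (s2 : ℕ)))
         * qBinom ω (p : ℕ) (r2 : ℕ) * qBinom ω (q : ℕ) (s1 : ℕ)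
    else 0 := by
  have hpos : 0 < n := R.npos
  have hp := p.isLt
  have hq := q.isLt
  have hstep : R.basis (p, q, l) = R.y ^ (p:ℕ) * R.x ^ (q:ℕ) * R.g ^ (l:ℕ) := R.basis_eq p q l
  rw [hstep, R.comul_mono]
  have hsum : ∀ i ∈ Finset.range ((p:ℕ) + 1), ∀ j ∈ Finset.range ((q:ℕ) + 1),
      ((ω : ℂ) ^ ((n - 1) * (((p:ℕ) - i + j) * ((q:ℕ) - j))) * qBinom ω (p:ℕ) i * qBinom ω (q:ℕ) j) •
        ((R.y ^ ((p:ℕ) - i) * R.x ^ j * R.g ^ (l:ℕ)) ⊗ₜ[ℂ]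
         (R.y ^ i * R.x ^ ((q:ℕ) - j) * R.g ^ ((p:ℕ) - i + j + (l:ℕ))))
      = (ω ^ ((n - 1) * (((p:ℕ) - i + j) * ((q:ℕ) - j))) * qBinom ω (p:ℕ) i * qBinom ω (q:ℕ) j) •
        (R.basis.tensorProduct R.basis)
          ((⟨((p:ℕ) - i) % n, Nat.mod_lt _ hpos⟩, ⟨j % n, Nat.mod_lt _ hpos⟩, l),
           (⟨i % n, Nat.mod_lt _ hpos⟩, ⟨((q:ℕ) - j) % n, Nat.mod_lt _ hpos⟩,
            ⟨((p:ℕ) - i + j + (l:ℕ)) % n, Nat.mod_lt _ hpos⟩)) := by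
    intro i hi j hj
    rw [Finset.mem_range] at hi hj
    have m1 : ((p:ℕ) - i) % n = (p:ℕ) - i := Nat.mod_eq_of_lt (by omega)
    have m2 : j % n = j := Nat.mod_eq_of_lt (by omega)
    have m3 : (l:ℕ) % n = (l:ℕ) := Nat.mod_eq_of_lt l.isLt
    have m4 : i % n = i := Nat.mod_eq_of_lt (by omega)
    have m5 : ((q:ℕ) - j) % n = (q:ℕ) - j := Nat.mod_eq_of_lt (by omega)
    rw [R.mono_eq_basis ((p:ℕ) - i) j (l:ℕ) (by omega) (by omega),
        R.mono_eq_basis i ((q:ℕ) - j) ((p:ℕ) - i + j + (l:ℕ)) (by omega) (by omega),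
        Module.Basis.tensorProduct_apply]
    refine congrArg₂ (· • ·) rfl (congrArg₂ (· ⊗ₜ[ℂ] ·) (congrArg R.basis ?_) (congrArg R.basis ?_))
    · exact Prod.ext (Fin.ext m1.symm) (Prod.ext (Fin.ext m2.symm) (Fin.ext m3))
    · exact Prod.ext (Fin.ext m4.symm) (Prod.ext (Fin.ext m5.symm) rfl)
  rw [Finset.sum_congr rfl (fun i hi => Finset.sum_congr rfl (hsum i hi))]
  simp only [map_sum, map_smul, Module.Basis.repr_self, Finsupp.finset_sum_apply,
    Finsupp.smul_apply, Finsupp.single_apply, smul_eq_mul]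
  by_cases hc : (p : ℕ) = (r1 : ℕ) + (r2 : ℕ) ∧ (q : ℕ) = (s1 : ℕ) + (s2 : ℕ) ∧ l = l1
      ∧ (l2 : ℕ) = ((r1 : ℕ) + (s1 : ℕ) + (l1 : ℕ)) % n
  · obtain ⟨h1, h2, h3, h4⟩ := hc
    rw [if_pos ⟨h1, h2, h3, h4⟩]
    refine (Finset.sum_eq_single_of_mem ((r2:ℕ)) (Finset.mem_range.mpr (by omega)) ?_).trans ?_
    · intro i hi hne
      rw [Finset.mem_range] at hi
      refine Finset.sum_eq_zero fun j hj => ?_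
      have hneq : ((⟨((p:ℕ) - i) % n, Nat.mod_lt _ hpos⟩, (⟨j % n, Nat.mod_lt _ hpos⟩ : Fin n), l),
           ((⟨i % n, Nat.mod_lt _ hpos⟩ : Fin n), (⟨((q:ℕ) - j) % n, Nat.mod_lt _ hpos⟩ : Fin n),
            (⟨((p:ℕ) - i + j + (l:ℕ)) % n, Nat.mod_lt _ hpos⟩ : Fin n)))
            ≠ ((r1, s1, l1), (r2, s2, l2)) := by
        intro hcontr
        apply hne
        have hcv := congrArg (fun t => ((t.2.1 : Fin n) : ℕ)) hcontr
        simpa [Nat.mod_eq_of_lt (show i < n by omega)] using hcv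
      rw [if_neg hneq, mul_zero]
    · refine (Finset.sum_eq_single_of_mem ((s1:ℕ)) (Finset.mem_range.mpr (by omega)) ?_).trans ?_
      · intro j hj hne
        rw [Finset.mem_range] at hj
        have hneq : ((⟨((p:ℕ) - (r2:ℕ)) % n, Nat.mod_lt _ hpos⟩, (⟨j % n, Nat.mod_lt _ hpos⟩ : Fin n), l),
             ((⟨(r2:ℕ) % n, Nat.mod_lt _ hpos⟩ : Fin n), (⟨((q:ℕ) - j) % n, Nat.mod_lt _ hpos⟩ : Fin n),
              (⟨((p:ℕ) - (r2:ℕ) + j + (l:ℕ)) % n, Nat.mod_lt _ hpos⟩ : Fin n)))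
              ≠ ((r1, s1, l1), (r2, s2, l2)) := by
          intro hcontr
          apply hne
          have hcv := congrArg (fun t => ((t.1.2.1 : Fin n) : ℕ)) hcontr
          simpa [Nat.mod_eq_of_lt (show j < n by omega)] using hcv
        rw [if_neg hneq, mul_zero]
      · have hidx : ((⟨((p:ℕ) - (r2:ℕ)) % n, Nat.mod_lt _ hpos⟩, (⟨(s1:ℕ) % n, Nat.mod_lt _ hpos⟩ : Fin n), l),
           ((⟨(r2:ℕ) % n, Nat.mod_lt _ hpos⟩ : Fin n), (⟨((q:ℕ) - (s1:ℕ)) % n, Nat.mod_lt _ hpos⟩ : Fin n),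
            (⟨((p:ℕ) - (r2:ℕ) + (s1:ℕ) + (l:ℕ)) % n, Nat.mod_lt _ hpos⟩ : Fin n)))
            = ((r1, s1, l1), (r2, s2, l2)) := by
          have c3v : (l:ℕ) = (l1:ℕ) := congrArg Fin.val h3
          refine Prod.ext (Prod.ext (Fin.ext ?_) (Prod.ext (Fin.ext ?_) (Fin.ext ?_)))
            (Prod.ext (Fin.ext ?_) (Prod.ext (Fin.ext ?_) (Fin.ext ?_)))
          · show ((p:ℕ) - (r2:ℕ)) % n = (r1:ℕ); rw [Nat.mod_eq_of_lt (by omega)]; omega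
          · show (s1:ℕ) % n = (s1:ℕ); exact Nat.mod_eq_of_lt s1.isLt
          · exact c3v
          · show (r2:ℕ) % n = (r2:ℕ); exact Nat.mod_eq_of_lt r2.isLt
          · show ((q:ℕ) - (s1:ℕ)) % n = (s2:ℕ); rw [Nat.mod_eq_of_lt (by omega)]; omega
          · show ((p:ℕ) - (r2:ℕ) + (s1:ℕ) + (l:ℕ)) % n = (l2:ℕ)
            rw [h4]; congr 1; omega
        rw [if_pos hidx, mul_one,
          show (p:ℕ) - (r2:ℕ) + (s1:ℕ) = (r1:ℕ) + (s1:ℕ) by omega,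
          show (q:ℕ) - (s1:ℕ) = (s2:ℕ) by omega]
  · rw [if_neg hc]
    refine Finset.sum_eq_zero fun i hi => Finset.sum_eq_zero fun j hj => ?_
    rw [Finset.mem_range] at hi hj
    have hneq : ((⟨((p:ℕ) - i) % n, Nat.mod_lt _ hpos⟩, (⟨j % n, Nat.mod_lt _ hpos⟩ : Fin n), l),
         ((⟨i % n, Nat.mod_lt _ hpos⟩ : Fin n), (⟨((q:ℕ) - j) % n, Nat.mod_lt _ hpos⟩ : Fin n),
          (⟨((p:ℕ) - i + j + (l:ℕ)) % n, Nat.mod_lt _ hpos⟩ : Fin n)))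
          ≠ ((r1, s1, l1), (r2, s2, l2)) := by
      intro hcontr
      apply hc
      have c1 := congrArg (fun t => ((t.1.1 : Fin n) : ℕ)) hcontr
      have c2 := congrArg (fun t => ((t.1.2.1 : Fin n) : ℕ)) hcontr
      have c3 : l = l1 := congrArg (fun t => (t.1.2.2 : Fin n)) hcontr
      have c4 := congrArg (fun t => ((t.2.1 : Fin n) : ℕ)) hcontr
      have c5 := congrArg (fun t => ((t.2.2.1 : Fin n) : ℕ)) hcontr
      have c6 := congrArg (fun t => ((t.2.2.2 : Fin n) : ℕ)) hcontr
      simp only at c1 c2 c4 c5 c6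
      rw [Nat.mod_eq_of_lt (show (p:ℕ) - i < n by omega)] at c1
      rw [Nat.mod_eq_of_lt (show j < n by omega)] at c2
      rw [Nat.mod_eq_of_lt (show i < n by omega)] at c4
      rw [Nat.mod_eq_of_lt (show (q:ℕ) - j < n by omega)] at c5
      have c3v : (l:ℕ) = (l1:ℕ) := congrArg Fin.val c3
      refine ⟨by omega, by omega, c3, ?_⟩
      rw [← c6]; congr 1; omega
    rw [if_neg hneq, mul_zero]

end RadfordAlgebra

namespace RadfordAlgebra

variable {n : ℕ} {ω : ℂ} {H : Type*} [Ring H] [HopfAlgebra ℂ H]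

lemma omega_ne_zero (R : RadfordAlgebra n ω H) : ω ≠ 0 := by
  intro h0
  have h := R.omega_pow_n
  rw [h0, zero_pow (by have := R.hn; omega)] at h
  exact one_ne_zero h.symm

lemma qBinom_one_ne_zero (R : RadfordAlgebra n ω H) {m : ℕ} (h0 : 0 < m) (h : m < n) :
    qBinom ω m 1 ≠ 0 := by
  rw [qBinom_one_right]
  have hω1 : ω ≠ 1 := R.hω.ne_one R.hn
  rw [geom_sum_eq hω1]
  exact div_ne_zero (sub_ne_zero.mpr (R.hω.pow_ne_one_of_pos_of_lt h0.ne' h))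
    (sub_ne_zero.mpr hω1)

lemma repr_comul_eval (R : RadfordAlgebra n ω H) (v : H) (r1 s1 l1 r2 s2 l2 : Fin n)
    (h1 : (r1:ℕ) + (r2:ℕ) < n) (h2 : (s1:ℕ) + (s2:ℕ) < n) :
    (R.basis.tensorProduct R.basis).repr (Coalgebra.comul (R := ℂ) v) ((r1,s1,l1),(r2,s2,l2)) =
    if (l2:ℕ) = ((r1:ℕ) + (s1:ℕ) + (l1:ℕ)) % n
    then R.basis.repr v (⟨(r1:ℕ) + (r2:ℕ), h1⟩, ⟨(s1:ℕ) + (s2:ℕ), h2⟩, l1)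
         * (ω ^ ((n-1) * (((r1:ℕ) + (s1:ℕ)) * (s2:ℕ)))
            * qBinom ω ((r1:ℕ)+(r2:ℕ)) (r2:ℕ) * qBinom ω ((s1:ℕ)+(s2:ℕ)) (s1:ℕ))
    else 0 := by
  conv_lhs => rw [← R.basis.sum_repr v]
  rw [map_sum, map_sum, Finsupp.finset_sum_apply]
  have hterm : ∀ u : Fin n × Fin n × Fin n,
      (R.basis.tensorProduct R.basis).repr
          (Coalgebra.comul (R := ℂ) (R.basis.repr v u • R.basis u)) ((r1,s1,l1),(r2,s2,l2))
        = R.basis.repr v u *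
          (if (u.1 : ℕ) = (r1 : ℕ) + (r2 : ℕ) ∧ (u.2.1 : ℕ) = (s1 : ℕ) + (s2 : ℕ) ∧ u.2.2 = l1
              ∧ (l2 : ℕ) = ((r1 : ℕ) + (s1 : ℕ) + (l1 : ℕ)) % n
           then ω ^ ((n - 1) * (((r1 : ℕ) + (s1 : ℕ)) * (s2 : ℕ)))
                * qBinom ω (u.1 : ℕ) (r2 : ℕ) * qBinom ω (u.2.1 : ℕ) (s1 : ℕ)
           else 0) := by
    rintro ⟨a, b, c⟩
    rw [map_smul, map_smul, Finsupp.smul_apply, R.repr_comul_basis a b c r1 s1 l1 r2 s2 l2,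
      smul_eq_mul]
  rw [Finset.sum_congr rfl (fun u _ => hterm u)]
  refine (Finset.sum_eq_single (⟨⟨(r1:ℕ)+(r2:ℕ), h1⟩, ⟨(s1:ℕ)+(s2:ℕ), h2⟩, l1⟩ :
      Fin n × Fin n × Fin n) ?_ ?_).trans ?_
  · rintro ⟨a, b, c⟩ - hne
    rw [if_neg, mul_zero]
    rintro ⟨ha, hb, hc, -⟩
    exact hne (Prod.ext (Fin.ext ha) (Prod.ext (Fin.ext hb) hc))
  · intro habs
    exact absurd (Finset.mem_univ _) habs
  · by_cases hf : (l2:ℕ) = ((r1:ℕ) + (s1:ℕ) + (l1:ℕ)) % n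
    · rw [if_pos ⟨rfl, rfl, rfl, hf⟩, if_pos hf]
    · rw [if_neg (fun hcon => hf hcon.2.2.2), if_neg hf, mul_zero]

lemma repr_comul_eval_pos (R : RadfordAlgebra n ω H) (v : H) (P Q r1 s1 l1 r2 s2 l2 : Fin n)
    (hP : (P:ℕ) = (r1:ℕ) + (r2:ℕ)) (hQ : (Q:ℕ) = (s1:ℕ) + (s2:ℕ))
    (hl : (l2:ℕ) = ((r1:ℕ) + (s1:ℕ) + (l1:ℕ)) % n) :
    (R.basis.tensorProduct R.basis).repr (Coalgebra.comul (R := ℂ) v) ((r1,s1,l1),(r2,s2,l2))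
      = R.basis.repr v (P, Q, l1)
        * (ω ^ ((n-1) * (((r1:ℕ) + (s1:ℕ)) * (s2:ℕ)))
           * qBinom ω (P:ℕ) (r2:ℕ) * qBinom ω (Q:ℕ) (s1:ℕ)) := by
  have h1 : (r1:ℕ) + (r2:ℕ) < n := hP ▸ P.isLt
  have h2 : (s1:ℕ) + (s2:ℕ) < n := hQ ▸ Q.isLt
  rw [R.repr_comul_eval v r1 s1 l1 r2 s2 l2 h1 h2, if_pos hl,
    show (⟨(r1:ℕ)+(r2:ℕ), h1⟩ : Fin n) = P from Fin.ext hP.symm,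
    show (⟨(s1:ℕ)+(s2:ℕ), h2⟩ : Fin n) = Q from Fin.ext hQ.symm, ← hP, ← hQ]

lemma repr_comul_eval_neg (R : RadfordAlgebra n ω H) (v : H) (r1 s1 l1 r2 s2 l2 : Fin n)
    (h1 : (r1:ℕ) + (r2:ℕ) < n) (h2 : (s1:ℕ) + (s2:ℕ) < n)
    (hl : (l2:ℕ) ≠ ((r1:ℕ) + (s1:ℕ) + (l1:ℕ)) % n) :
    (R.basis.tensorProduct R.basis).repr (Coalgebra.comul (R := ℂ) v) ((r1,s1,l1),(r2,s2,l2))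
      = 0 := by
  rw [R.repr_comul_eval v r1 s1 l1 r2 s2 l2 h1 h2, if_neg hl]

end RadfordAlgebra

lemma mod_aux1 {n k t : ℕ} (hn : 0 < n) (hk : k < n) (h : (t + k) % n = k) : t % n = 0 := by
  have h2 : (t % n + k) % n = k := by
    rwa [Nat.add_mod, Nat.mod_eq_of_lt hk] at h
  have htlt : t % n < n := Nat.mod_lt _ hn
  rcases lt_or_ge (t % n + k) n with hlt | hge
  · rw [Nat.mod_eq_of_lt hlt] at h2; omega
  · have h3 : (t % n + k) % n = t % n + k - n := by
      rw [Nat.mod_eq_sub_mod hge, Nat.mod_eq_of_lt (by omega)]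
    omega

lemma mod_aux2 {n m : ℕ} (hn : 0 < n) (h : m % n = 0) (h1 : 0 < m) (h2 : m < 2*n) : m = n := by
  obtain ⟨q, hq⟩ := Nat.dvd_of_mod_eq_zero h
  match q, hq with
  | 0, hq => omega
  | 1, hq => omega
  | (q+2), hq =>
    exfalso
    have : n * (q+2) = n*q + 2*n := by ring
    omega

namespace RadfordAlgebra

variable {n : ℕ} {ω : ℂ} {H : Type*} [Ring H] [HopfAlgebra ℂ H]

lemma grouplike [NeZero n] (R : RadfordAlgebra n ω H) (G : H) (hG : G ≠ 0)
    (hΔ : Coalgebra.comul (R := ℂ) G = G ⊗ₜ[ℂ] G) :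
    ∃ k : Fin n, G = R.basis (0, 0, k) := by
  have hpos : 0 < n := R.npos
  have mP : ∀ (P Q r1 s1 l1 r2 s2 l2 : Fin n), (P:ℕ) = (r1:ℕ) + (r2:ℕ) →
      (Q:ℕ) = (s1:ℕ) + (s2:ℕ) → (l2:ℕ) = ((r1:ℕ) + (s1:ℕ) + (l1:ℕ)) % n →
      R.basis.repr G (P, Q, l1) * (ω ^ ((n-1) * (((r1:ℕ) + (s1:ℕ)) * (s2:ℕ)))
           * qBinom ω (P:ℕ) (r2:ℕ) * qBinom ω (Q:ℕ) (s1:ℕ))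
        = R.basis.repr G (r2,s2,l2) * R.basis.repr G (r1,s1,l1) := by
    intro P Q r1 s1 l1 r2 s2 l2 hP hQ hl
    have h0 := R.repr_comul_eval_pos G P Q r1 s1 l1 r2 s2 l2 hP hQ hl
    rw [hΔ, Module.Basis.tensorProduct_repr_tmul_apply, smul_eq_mul] at h0
    exact h0.symm
  have mN : ∀ (r1 s1 l1 r2 s2 l2 : Fin n), (r1:ℕ) + (r2:ℕ) < n → (s1:ℕ) + (s2:ℕ) < n →
      (l2:ℕ) ≠ ((r1:ℕ) + (s1:ℕ) + (l1:ℕ)) % n →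
      R.basis.repr G (r2,s2,l2) * R.basis.repr G (r1,s1,l1) = 0 := by
    intro r1 s1 l1 r2 s2 l2 h1 h2 hl
    have h0 := R.repr_comul_eval_neg G r1 s1 l1 r2 s2 l2 h1 h2 hl
    rw [hΔ, Module.Basis.tensorProduct_repr_tmul_apply, smul_eq_mul] at h0
    exact h0
  have hA : ∀ r s l : Fin n, R.basis.repr G (r,s,l)
      = R.basis.repr G (r,s,l) * R.basis.repr G (0,0,l) := by
    intro r s l
    have h := mP r s 0 0 l r s l (by simp) (by simp)
      (by simp [Nat.mod_eq_of_lt l.isLt])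
    simpa [qBinom_self, qBinom_zero] using h
  have hex : ∃ k : Fin n, R.basis.repr G (0,0,k) ≠ 0 := by
    by_contra hno
    push_neg at hno
    apply hG
    have hz : ∀ u : Fin n × Fin n × Fin n, R.basis.repr G u = 0 := by
      rintro ⟨r, s, l⟩
      rw [hA r s l, hno l, mul_zero]
    have hzero : R.basis.repr G = 0 := Finsupp.ext fun u => hz u
    calc G = R.basis.repr.symm (R.basis.repr G) := (R.basis.repr.symm_apply_apply G).symm
      _ = R.basis.repr.symm 0 := by rw [hzero]
      _ = 0 := map_zero _
  obtain ⟨k, hk⟩ := hex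
  have hOne : R.basis.repr G (0,0,k) = 1 := by
    have h := mP 0 0 0 0 k 0 0 k (by simp) (by simp) (by simp [Nat.mod_eq_of_lt k.isLt])
    simp only [qBinom_zero, Fin.val_zero, add_zero, mul_zero, zero_mul, pow_zero,
      one_mul, mul_one] at h
    exact (mul_left_cancel₀ hk (by rw [mul_one]; exact h)).symm
  have hL : ∀ l : Fin n, l ≠ k → R.basis.repr G (0,0,l) = 0 := by
    intro l hne
    have h := mN 0 0 l 0 0 k (by simpa using hpos) (by simpa using hpos)
      (by
        simp only [Fin.val_zero, zero_add, Nat.mod_eq_of_lt l.isLt]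
        exact fun hh => hne (Fin.ext hh).symm)
    rwa [hOne, one_mul] at h
  have hNotk : ∀ r s l : Fin n, l ≠ k → R.basis.repr G (r,s,l) = 0 := by
    intro r s l hne
    rw [hA r s l, hL l hne, mul_zero]
  have hB : ∀ r s : Fin n, ((r:ℕ) + (s:ℕ)) % n ≠ 0 → R.basis.repr G (r,s,k) = 0 := by
    intro r s hmod
    have hl2lt : ((r:ℕ) + (s:ℕ) + (k:ℕ)) % n < n := Nat.mod_lt _ hpos
    have h := mP r s r s k 0 0 ⟨((r:ℕ) + (s:ℕ) + (k:ℕ)) % n, hl2lt⟩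
      (by simp) (by simp) rfl
    simp only [qBinom_zero, Fin.val_zero, mul_zero, pow_zero, one_mul, mul_one,
      qBinom_self] at h
    have hne : (⟨((r:ℕ) + (s:ℕ) + (k:ℕ)) % n, hl2lt⟩ : Fin n) ≠ k := by
      intro hcon
      apply hmod
      have : ((r:ℕ) + (s:ℕ) + (k:ℕ)) % n = (k:ℕ) := congrArg Fin.val hcon
      exact mod_aux1 hpos k.isLt this
    rw [hL _ hne, zero_mul] at h
    exact h
  have hC : ∀ r s : Fin n, 0 < (r:ℕ) → 0 < (s:ℕ) → R.basis.repr G (r,s,k) = 0 := by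
    intro r s hr hs
    have hl2lt : ((r:ℕ) + ((0:Fin n):ℕ) + (k:ℕ)) % n < n := Nat.mod_lt _ hpos
    have h := mP r s r 0 k 0 s ⟨((r:ℕ) + ((0:Fin n):ℕ) + (k:ℕ)) % n, hl2lt⟩
      (by simp) (by simp) rfl
    have hr0 : R.basis.repr G (r, 0, k) = 0 := by
      refine hB r 0 ?_
      simp only [Fin.val_zero, add_zero, Nat.mod_eq_of_lt r.isLt]
      omega
    rw [hr0, mul_zero] at h
    simp only [qBinom_zero, Fin.val_zero, mul_one] at h
    rcases mul_eq_zero.mp h with h' | h'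
    · exact h'
    · exact absurd h' (pow_ne_zero _ (R.omega_ne_zero))
  refine ⟨k, ?_⟩
  have hrepr : R.basis.repr G = R.basis.repr (R.basis (0,0,k)) := by
    rw [Module.Basis.repr_self]
    refine Finsupp.ext ?_
    rintro ⟨r, s, l⟩
    rw [Finsupp.single_apply]
    by_cases hu : ((0:Fin n), (0:Fin n), k) = (r, s, l)
    · rw [if_pos hu, ← hu]
      exact hOne
    · rw [if_neg hu]
      by_cases hlk : l = k
      · subst hlk
        have hrlt := r.isLt
        have hslt := s.isLt
        have hrs : (r:ℕ) ≠ 0 ∨ (s:ℕ) ≠ 0 := by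
          by_contra hcon
          push_neg at hcon
          exact hu (Prod.ext (Fin.ext (by simpa using hcon.1.symm)) (Prod.ext (Fin.ext (by simpa using hcon.2.symm)) rfl))
      -- note l = k now named l
        by_cases hmod : ((r:ℕ) + (s:ℕ)) % n = 0
        · have hsum : (r:ℕ) + (s:ℕ) = n := mod_aux2 hpos hmod (by omega) (by omega)
          exact hC r s (by omega) (by omega)
        · exact hB r s hmod
      · exact hNotk r s l hlk
  exact R.basis.repr.injective hrepr

end RadfordAlgebra

namespace RadfordAlgebra

variable {n : ℕ} {ω : ℂ} {H : Type*} [Ring H] [HopfAlgebra ℂ H]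

lemma skew [NeZero n] (R : RadfordAlgebra n ω H) (c : H) (k : Fin n) (hk1 : k ≠ 1)
    (hΔc : Coalgebra.comul (R := ℂ) c = c ⊗ₜ[ℂ] R.basis (0,0,k) + (1:H) ⊗ₜ[ℂ] c) :
    ∀ r s l : Fin n, ¬((r:ℕ) = 0 ∧ (s:ℕ) = 0) → R.basis.repr c (r,s,l) = 0 := by
  have hpos : 0 < n := R.npos
  have hone : (1:H) = R.basis (0,0,0) := by rw [R.basis_eq]; simp
  have hv1 : ((1:Fin n):ℕ) = 1 := by rw [Fin.val_one']; exact Nat.mod_eq_of_lt R.hn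
  have sP : ∀ (P Q r1 s1 l1 r2 s2 l2 : Fin n), (P:ℕ) = (r1:ℕ) + (r2:ℕ) →
      (Q:ℕ) = (s1:ℕ) + (s2:ℕ) → (l2:ℕ) = ((r1:ℕ) + (s1:ℕ) + (l1:ℕ)) % n →
      R.basis.repr c (P, Q, l1) * (ω ^ ((n-1) * (((r1:ℕ) + (s1:ℕ)) * (s2:ℕ)))
           * qBinom ω (P:ℕ) (r2:ℕ) * qBinom ω (Q:ℕ) (s1:ℕ))
        = (if ((0:Fin n),(0:Fin n),k) = (r2,s2,l2) then (1:ℂ) else 0) * R.basis.repr c (r1,s1,l1)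
          + R.basis.repr c (r2,s2,l2)
            * (if ((0:Fin n),(0:Fin n),(0:Fin n)) = (r1,s1,l1) then (1:ℂ) else 0) := by
    intro P Q r1 s1 l1 r2 s2 l2 hP hQ hl
    have h0 := R.repr_comul_eval_pos c P Q r1 s1 l1 r2 s2 l2 hP hQ hl
    rw [hΔc, hone, map_add, Finsupp.add_apply, Module.Basis.tensorProduct_repr_tmul_apply,
      Module.Basis.tensorProduct_repr_tmul_apply, Module.Basis.repr_self, Module.Basis.repr_self,
      Finsupp.single_apply, Finsupp.single_apply, smul_eq_mul, smul_eq_mul] at h0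
    exact h0.symm
  have K1 : ∀ r s l : Fin n, ¬((r:ℕ) = 0 ∧ (s:ℕ) = 0) → (l:ℕ) ≠ 0 →
      R.basis.repr c (r,s,l) = 0 := by
    intro r s l hrs hl
    have hne1 : ((0:Fin n),(0:Fin n),k) ≠ (r,s,l) := by
      intro hcon
      apply hrs
      constructor
      · have := congrArg (fun t : Fin n × Fin n × Fin n => ((t.1 : Fin n) : ℕ)) hcon
        simpa using this.symm
      · have := congrArg (fun t : Fin n × Fin n × Fin n => ((t.2.1 : Fin n) : ℕ)) hcon
        simpa using this.symm
    have hne2 : ((0:Fin n),(0:Fin n),(0:Fin n)) ≠ ((0:Fin n),(0:Fin n),l) := by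
      intro hcon
      apply hl
      have := congrArg (fun t : Fin n × Fin n × Fin n => ((t.2.2 : Fin n) : ℕ)) hcon
      simpa using this.symm
    have h := sP r s 0 0 l r s l (by simp) (by simp) (by simp [Nat.mod_eq_of_lt l.isLt])
    rw [if_neg hne1, if_neg hne2] at h
    simpa [qBinom_self, qBinom_zero] using h
  have K2 : ∀ r s : Fin n, ¬((r:ℕ) = 0 ∧ (s:ℕ) = 0) → ((r:ℕ) + (s:ℕ)) % n ≠ (k:ℕ) →
      R.basis.repr c (r,s,0) = 0 := by
    intro r s hrs hmod
    have hlt : ((r:ℕ) + (s:ℕ) + ((0:Fin n):ℕ)) % n < n := Nat.mod_lt _ hpos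
    have h := sP r s r s 0 0 0 ⟨((r:ℕ) + (s:ℕ) + ((0:Fin n):ℕ)) % n, hlt⟩
      (by simp) (by simp) rfl
    have hne1 : ((0:Fin n),(0:Fin n),k)
        ≠ ((0:Fin n), (0:Fin n), (⟨((r:ℕ) + (s:ℕ) + ((0:Fin n):ℕ)) % n, hlt⟩ : Fin n)) := by
      intro hcon
      apply hmod
      have := congrArg (fun t : Fin n × Fin n × Fin n => ((t.2.2 : Fin n) : ℕ)) hcon
      simpa using this.symm
    have hne2 : ((0:Fin n),(0:Fin n),(0:Fin n)) ≠ (r, s, (0:Fin n)) := by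
      intro hcon
      apply hrs
      constructor
      · have := congrArg (fun t : Fin n × Fin n × Fin n => ((t.1 : Fin n) : ℕ)) hcon
        simpa using this.symm
      · have := congrArg (fun t : Fin n × Fin n × Fin n => ((t.2.1 : Fin n) : ℕ)) hcon
        simpa using this.symm
    rw [if_neg hne1, if_neg hne2] at h
    simpa [qBinom_self, qBinom_zero] using h
  have K3 : ∀ r s : Fin n, 0 < (r:ℕ) → 0 < (s:ℕ) → R.basis.repr c (r,s,0) = 0 := by
    intro r s hr hs
    have hlt : ((r:ℕ) + ((0:Fin n):ℕ) + ((0:Fin n):ℕ)) % n < n := Nat.mod_lt _ hpos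
    have h := sP r s r 0 0 0 s ⟨((r:ℕ) + ((0:Fin n):ℕ) + ((0:Fin n):ℕ)) % n, hlt⟩
      (by simp) (by simp) rfl
    have hne1 : ((0:Fin n),(0:Fin n),k)
        ≠ ((0:Fin n), s, (⟨((r:ℕ) + ((0:Fin n):ℕ) + ((0:Fin n):ℕ)) % n, hlt⟩ : Fin n)) := by
      intro hcon
      have := congrArg (fun t : Fin n × Fin n × Fin n => ((t.2.1 : Fin n) : ℕ)) hcon
      simp at this
      omega
    have hne2 : ((0:Fin n),(0:Fin n),(0:Fin n)) ≠ (r, (0:Fin n), (0:Fin n)) := by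
      intro hcon
      have := congrArg (fun t : Fin n × Fin n × Fin n => ((t.1 : Fin n) : ℕ)) hcon
      simp at this
      omega
    rw [if_neg hne1, if_neg hne2] at h
    simp only [Fin.val_zero, qBinom_zero, mul_one, mul_zero, zero_mul, add_zero, zero_add] at h
    rcases mul_eq_zero.mp h with h' | h'
    · exact h'
    · exact absurd h' (pow_ne_zero _ (R.omega_ne_zero))
  have K4a : 2 ≤ (k:ℕ) → R.basis.repr c (k, 0, 0) = 0 := by
    intro hk2
    have hklt := k.isLt
    have hkm : (k:ℕ) - 1 < n := by omega
    have h1n : 1 < n := R.hn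
    have hlt : (((⟨(k:ℕ) - 1, hkm⟩ : Fin n) :ℕ) + ((0:Fin n):ℕ) + ((0:Fin n):ℕ)) % n < n :=
      Nat.mod_lt _ hpos
    have h := sP k 0 ⟨(k:ℕ) - 1, hkm⟩ 0 0 ⟨1, h1n⟩ 0
      ⟨(((⟨(k:ℕ) - 1, hkm⟩ : Fin n):ℕ) + ((0:Fin n):ℕ) + ((0:Fin n):ℕ)) % n, hlt⟩
      (by simp; omega) (by simp) rfl
    have hne1 : ((0:Fin n),(0:Fin n),k)
        ≠ ((⟨1, h1n⟩ : Fin n), (0:Fin n),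
           (⟨(((⟨(k:ℕ) - 1, hkm⟩ : Fin n):ℕ) + ((0:Fin n):ℕ) + ((0:Fin n):ℕ)) % n, hlt⟩ : Fin n)) := by
      intro hcon
      have := congrArg (fun t : Fin n × Fin n × Fin n => ((t.1 : Fin n) : ℕ)) hcon
      simp at this
    have hne2 : ((0:Fin n),(0:Fin n),(0:Fin n)) ≠ ((⟨(k:ℕ) - 1, hkm⟩ : Fin n), (0:Fin n), (0:Fin n)) := by
      intro hcon
      have := congrArg (fun t : Fin n × Fin n × Fin n => ((t.1 : Fin n) : ℕ)) hcon
      simp at this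
      omega
    rw [if_neg hne1, if_neg hne2] at h
    simp only [Fin.val_zero, qBinom_zero, mul_one, mul_zero, zero_mul, add_zero, zero_add,
      pow_zero, one_mul] at h
    rcases mul_eq_zero.mp h with h' | h'
    · exact h'
    · exact absurd h' (R.qBinom_one_ne_zero (by omega) hklt)
  have K4b : 2 ≤ (k:ℕ) → R.basis.repr c (0, k, 0) = 0 := by
    intro hk2
    have hklt := k.isLt
    have hkm : (k:ℕ) - 1 < n := by omega
    have h1n : 1 < n := R.hn
    have hlt : (((0:Fin n):ℕ) + ((⟨1, h1n⟩ : Fin n):ℕ) + ((0:Fin n):ℕ)) % n < n :=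
      Nat.mod_lt _ hpos
    have h := sP 0 k 0 ⟨1, h1n⟩ 0 0 ⟨(k:ℕ) - 1, hkm⟩
      ⟨(((0:Fin n):ℕ) + ((⟨1, h1n⟩ : Fin n):ℕ) + ((0:Fin n):ℕ)) % n, hlt⟩
      (by simp) (by simp; omega) rfl
    have hne1 : ((0:Fin n),(0:Fin n),k)
        ≠ ((0:Fin n), (⟨(k:ℕ) - 1, hkm⟩ : Fin n),
           (⟨(((0:Fin n):ℕ) + ((⟨1, h1n⟩ : Fin n):ℕ) + ((0:Fin n):ℕ)) % n, hlt⟩ : Fin n)) := by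
      intro hcon
      have := congrArg (fun t : Fin n × Fin n × Fin n => ((t.2.1 : Fin n) : ℕ)) hcon
      simp at this
      omega
    have hne2 : ((0:Fin n),(0:Fin n),(0:Fin n)) ≠ ((0:Fin n), (⟨1, h1n⟩ : Fin n), (0:Fin n)) := by
      intro hcon
      have := congrArg (fun t : Fin n × Fin n × Fin n => ((t.2.1 : Fin n) : ℕ)) hcon
      simp at this
    rw [if_neg hne1, if_neg hne2] at h
    simp only [Fin.val_zero, qBinom_zero, mul_one, mul_zero, zero_mul, add_zero, zero_add] at h
    rcases mul_eq_zero.mp h with h' | h'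
    · exact h'
    · rcases mul_eq_zero.mp h' with h'' | h''
      · exact absurd h'' (pow_ne_zero _ (R.omega_ne_zero))
      · exact absurd h'' (R.qBinom_one_ne_zero (by omega) hklt)
  intro r s l hrs
  have hkv1 : (k:ℕ) ≠ 1 := fun hcon => hk1 (Fin.ext (by rw [hcon, hv1]))
  by_cases hl0 : (l:ℕ) = 0
  · have hl : l = 0 := Fin.ext (by simpa using hl0)
    subst hl
    by_cases hr0 : (r:ℕ) = 0
    · have hr : r = 0 := Fin.ext (by simpa using hr0)
      subst hr
      have hs0 : (s:ℕ) ≠ 0 := fun hcon => hrs ⟨rfl, hcon⟩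
      by_cases hsk : (s:ℕ) = (k:ℕ)
      · have hs : s = k := Fin.ext hsk
        subst hs
        exact K4b (by omega)
      · refine K2 0 s (by simpa using hs0) ?_
        simpa [Nat.mod_eq_of_lt s.isLt] using hsk
    · by_cases hs0 : (s:ℕ) = 0
      · have hs : s = 0 := Fin.ext (by simpa using hs0)
        subst hs
        by_cases hrk : (r:ℕ) = (k:ℕ)
        · have hr : r = k := Fin.ext hrk
          subst hr
          exact K4a (by omega)
        · refine K2 r 0 (by simpa using hr0) ?_
          simpa [Nat.mod_eq_of_lt r.isLt] using hrk
      · exact K3 r s (by omega) (by omega)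
  · exact K1 r s l hrs hl0

end RadfordAlgebra

/-- every `*`-structure on the Radford algebra `H` satisfies
`g* = g`. -/
theorem radford_star_g
    {n : ℕ} {ω : ℂ} {H : Type*} [Ring H] [HopfAlgebra ℂ H]
    (R : RadfordAlgebra n ω H) (st : HopfStarStructure H) :
    st.star R.g = R.g := by
  haveI : NeZero n := ⟨by have := R.hn; omega⟩
  have hpos : 0 < n := R.npos
  have hv1 : ((1:Fin n):ℕ) = 1 := by rw [Fin.val_one']; exact Nat.mod_eq_of_lt R.hn
  have st1 : st.star 1 = 1 := by
    have h := st.star_mul (st.star 1) 1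
    rw [mul_one, st.star_star] at h
    rw [mul_one] at h
    exact h.symm
  have st0 : st.star 0 = 0 := by
    have h := st.star_smul 0 1
    simpa using h
  have hg1 : R.g = R.basis (0,0,1) := by
    rw [R.basis_eq]
    simp [hv1, Nat.mod_eq_of_lt R.hn]
  have hgne : R.g ≠ 0 := by rw [hg1]; exact R.basis.ne_zero _
  have hGne : st.star R.g ≠ 0 := by
    intro h
    apply hgne
    rw [← st.star_star R.g, h, st0]
  have hΔG : Coalgebra.comul (R := ℂ) (st.star R.g) = st.star R.g ⊗ₜ[ℂ] st.star R.g := by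
    rw [st.comul_star, R.comul_g, st.starTensor_tmul]
  obtain ⟨k, hk⟩ := R.grouplike (st.star R.g) hGne hΔG
  by_cases hk1 : k = 1
  · rw [hk, hk1, ← hg1]
  · exfalso
    have hΔc : Coalgebra.comul (R := ℂ) (st.star R.x) =
        st.star R.x ⊗ₜ[ℂ] R.basis (0,0,k) + (1:H) ⊗ₜ[ℂ] st.star R.x := by
      rw [st.comul_star, R.comul_x, st.starTensor_add, st.starTensor_tmul, st.starTensor_tmul,
        st1, hk]
    have hskew := R.skew (st.star R.x) k hk1 hΔc
    have hstarpow : ∀ m : ℕ, st.star (R.g ^ m) = (st.star R.g) ^ m := by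
      intro m
      induction m with
      | zero => simpa using st1
      | succ m ih => rw [pow_succ', st.star_mul, ih, ← pow_succ]
    have hstarb : ∀ l : Fin n, st.star (R.basis ((0:Fin n),(0:Fin n),l))
        = R.basis ((0:Fin n), (0:Fin n), (⟨((k:ℕ) * (l:ℕ)) % n, Nat.mod_lt _ hpos⟩ : Fin n)) := by
      intro l
      have hb : R.basis ((0:Fin n),(0:Fin n),l) = R.g ^ (l:ℕ) := by rw [R.basis_eq]; simp
      have hbk : R.basis ((0:Fin n),(0:Fin n),k) = R.g ^ (k:ℕ) := by rw [R.basis_eq]; simp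
      have hbkl : R.basis ((0:Fin n), (0:Fin n),
          (⟨((k:ℕ) * (l:ℕ)) % n, Nat.mod_lt _ hpos⟩ : Fin n))
          = R.g ^ (((k:ℕ) * (l:ℕ)) % n) := by rw [R.basis_eq]; simp
      rw [hb, hstarpow, hk, hbk, ← pow_mul, hbkl]
      exact R.g_pow_mod _
    have hx : R.x = R.basis (0,1,0) := by rw [R.basis_eq]; simp [hv1, Nat.mod_eq_of_lt R.hn]
    have hxc : R.x = st.star (st.star R.x) := (st.star_star R.x).symm
    have hrep0 : R.basis.repr R.x ((0:Fin n), (1:Fin n), (0:Fin n)) = 1 := by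
      rw [hx, Module.Basis.repr_self, Finsupp.single_eq_same]
    let φ : H →+ H := AddMonoidHom.mk' st.star st.star_add
    have hsum : R.x = ∑ u : Fin n × Fin n × Fin n,
        (starRingEnd ℂ) (R.basis.repr (st.star R.x) u) • st.star (R.basis u) := by
      have e1 : st.star R.x = ∑ u, R.basis.repr (st.star R.x) u • R.basis u :=
        (R.basis.sum_repr _).symm
      calc R.x = st.star (st.star R.x) := hxc
        _ = φ (∑ u, R.basis.repr (st.star R.x) u • R.basis u) := by rw [← e1]; rfl
        _ = ∑ u, φ (R.basis.repr (st.star R.x) u • R.basis u) := map_sum φ _ _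
        _ = ∑ u, (starRingEnd ℂ) (R.basis.repr (st.star R.x) u) • st.star (R.basis u) :=
            Finset.sum_congr rfl fun u _ => st.star_smul _ _
    have hzero : R.basis.repr R.x ((0:Fin n), (1:Fin n), (0:Fin n)) = 0 := by
      rw [hsum, map_sum, Finsupp.finset_sum_apply]
      refine Finset.sum_eq_zero ?_
      rintro ⟨r, s, l⟩ -
      rw [map_smul, Finsupp.smul_apply]
      by_cases hrs : (r:ℕ) = 0 ∧ (s:ℕ) = 0
      · have hr : r = 0 := Fin.ext (by simpa using hrs.1)
        have hs : s = 0 := Fin.ext (by simpa using hrs.2)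
        subst hr; subst hs
        rw [hstarb l, Module.Basis.repr_self]
        have hne : ((0:Fin n), (0:Fin n), (⟨((k:ℕ)*(l:ℕ)) % n, Nat.mod_lt _ hpos⟩ : Fin n))
            ≠ ((0:Fin n), (1:Fin n), (0:Fin n)) := by
          intro hcon
          have := congrArg (fun t : Fin n × Fin n × Fin n => ((t.2.1 : Fin n) : ℕ)) hcon
          simp only [Fin.val_zero, hv1] at this
          omega
        rw [Finsupp.single_apply, if_neg hne, smul_zero]
      · rw [hskew r s l hrs, map_zero, zero_smul]
    rw [hrep0] at hzero
    exact one_ne_zero hzero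
end
end

section
/- Assume n = 2. Then every *-structure on the Radford algebra H is of the form g* = g, x* = α₁₁x + α₁₂y, y* = α₂₁x + α₂₂y for some matrix A = (α_{ij}) ∈ M₂(ℂ) satisfying Ā·A = I₂, where Ā denotes the entrywise complex conjugate of A. -/
open TensorProduct

noncomputable section

namespace RadfordAlgebra

variable {ω : ℂ} {H : Type*} [Ring H] [HopfAlgebra ℂ H] (R : RadfordAlgebra 2 ω H)

include R in
lemma omega_eq : ω = -1 := R.hω.eq_neg_one_of_two_right

lemma hGG : R.g * R.g = 1 := by have := R.g_pow; rwa [pow_two] at this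
lemma hXX : R.x * R.x = 0 := by have := R.x_pow; rwa [pow_two] at this
lemma hYY : R.y * R.y = 0 := by have := R.y_pow; rwa [pow_two] at this
lemma hGX : R.g * R.x = -(R.x * R.g) := by
  obtain rfl := R.omega_eq; rw [R.rel_xg]; simp
lemma hGY : R.g * R.y = -(R.y * R.g) := by
  obtain rfl := R.omega_eq; rw [R.rel_gy]; simp
lemma hXY : R.x * R.y = -(R.y * R.x) := by
  obtain rfl := R.omega_eq; rw [R.rel_xy]; simp

lemma b000 : R.basis (0,0,0) = 1 := by simp [R.basis_eq]
lemma b001 : R.basis (0,0,1) = R.g := by simp [R.basis_eq]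
lemma b010 : R.basis (0,1,0) = R.x := by simp [R.basis_eq]
lemma b011 : R.basis (0,1,1) = R.x * R.g := by simp [R.basis_eq]
lemma b100 : R.basis (1,0,0) = R.y := by simp [R.basis_eq]
lemma b101 : R.basis (1,0,1) = R.y * R.g := by simp [R.basis_eq]
lemma b110 : R.basis (1,1,0) = R.y * R.x := by simp [R.basis_eq]
lemma b111 : R.basis (1,1,1) = R.y * R.x * R.g := by simp [R.basis_eq]

lemma comul_b000 : Coalgebra.comul (R := ℂ) (R.basis (0,0,0)) =
    R.basis (0,0,0) ⊗ₜ[ℂ] R.basis (0,0,0) := by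
  rw [R.b000]; simp [Algebra.TensorProduct.one_def]

lemma comul_b001 : Coalgebra.comul (R := ℂ) (R.basis (0,0,1)) =
    R.basis (0,0,1) ⊗ₜ[ℂ] R.basis (0,0,1) := by
  rw [R.b001, R.comul_g]

lemma comul_b010 : Coalgebra.comul (R := ℂ) (R.basis (0,1,0)) =
    R.basis (0,1,0) ⊗ₜ[ℂ] R.basis (0,0,1) + R.basis (0,0,0) ⊗ₜ[ℂ] R.basis (0,1,0) := by
  rw [R.b010, R.b001, R.b000, R.comul_x]

lemma comul_b100 : Coalgebra.comul (R := ℂ) (R.basis (1,0,0)) =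
    R.basis (1,0,0) ⊗ₜ[ℂ] R.basis (0,0,1) + R.basis (0,0,0) ⊗ₜ[ℂ] R.basis (1,0,0) := by
  rw [R.b100, R.b001, R.b000, R.comul_y]

lemma comul_b011 : Coalgebra.comul (R := ℂ) (R.basis (0,1,1)) =
    R.basis (0,1,1) ⊗ₜ[ℂ] R.basis (0,0,0) + R.basis (0,0,1) ⊗ₜ[ℂ] R.basis (0,1,1) := by
  rw [R.b011, R.b001, R.b000, Bialgebra.comul_mul, R.comul_x, R.comul_g, add_mul,
    Algebra.TensorProduct.tmul_mul_tmul, Algebra.TensorProduct.tmul_mul_tmul, R.hGG, one_mul]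

lemma comul_b101 : Coalgebra.comul (R := ℂ) (R.basis (1,0,1)) =
    R.basis (1,0,1) ⊗ₜ[ℂ] R.basis (0,0,0) + R.basis (0,0,1) ⊗ₜ[ℂ] R.basis (1,0,1) := by
  rw [R.b101, R.b001, R.b000, Bialgebra.comul_mul, R.comul_y, R.comul_g, add_mul,
    Algebra.TensorProduct.tmul_mul_tmul, Algebra.TensorProduct.tmul_mul_tmul, R.hGG, one_mul]

lemma comul_b110 : Coalgebra.comul (R := ℂ) (R.basis (1,1,0)) =
    R.basis (1,1,0) ⊗ₜ[ℂ] R.basis (0,0,0) - R.basis (1,0,0) ⊗ₜ[ℂ] R.basis (0,1,1)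
      + R.basis (0,1,0) ⊗ₜ[ℂ] R.basis (1,0,1) + R.basis (0,0,0) ⊗ₜ[ℂ] R.basis (1,1,0) := by
  rw [R.b110, R.b100, R.b011, R.b010, R.b101, R.b000, Bialgebra.comul_mul, R.comul_y, R.comul_x]
  simp only [add_mul, mul_add, Algebra.TensorProduct.tmul_mul_tmul, R.hGG, R.hGX,
    one_mul, mul_one, TensorProduct.tmul_neg]
  abel

lemma comul_b111 : Coalgebra.comul (R := ℂ) (R.basis (1,1,1)) =
    R.basis (1,1,1) ⊗ₜ[ℂ] R.basis (0,0,1) - R.basis (1,0,1) ⊗ₜ[ℂ] R.basis (0,1,0)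
      + R.basis (0,1,1) ⊗ₜ[ℂ] R.basis (1,0,0) + R.basis (0,0,1) ⊗ₜ[ℂ] R.basis (1,1,1) := by
  have h : R.basis (1,1,1) = R.basis (1,1,0) * R.basis (0,0,1) := by
    rw [R.b111, R.b110, R.b001]
  rw [h, Bialgebra.comul_mul, R.comul_b110, R.comul_b001]
  rw [R.b110, R.b100, R.b011, R.b010, R.b101, R.b000, R.b001]
  simp only [add_mul, sub_mul, Algebra.TensorProduct.tmul_mul_tmul,
    one_mul, mul_one, mul_assoc, R.hGG]

lemma coord_tmul (p : (Fin 2 × Fin 2 × Fin 2) × (Fin 2 × Fin 2 × Fin 2)) (i j : Fin 2 × Fin 2 × Fin 2) :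
    (R.basis.tensorProduct R.basis).coord p (R.basis i ⊗ₜ[ℂ] R.basis j) =
      if (i, j) = p then 1 else 0 := by
  rw [← Module.Basis.tensorProduct_apply, Module.Basis.coord_apply, Module.Basis.repr_self, Finsupp.single_apply]

lemma coord_b (p i : Fin 2 × Fin 2 × Fin 2) :
    R.basis.coord p (R.basis i) = if i = p then 1 else 0 := by
  rw [Module.Basis.coord_apply, Module.Basis.repr_self, Finsupp.single_apply]

set_option maxHeartbeats 1000000 in
lemma hrep_exists (h : H) : ∃ c0 c1 c2 c3 c4 c5 c6 c7 : ℂ,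
    h = c0 • R.basis (0,0,0) + c1 • R.basis (0,0,1) + c2 • R.basis (0,1,0)
      + c3 • R.basis (0,1,1) + c4 • R.basis (1,0,0) + c5 • R.basis (1,0,1)
      + c6 • R.basis (1,1,0) + c7 • R.basis (1,1,1) := by
  refine ⟨R.basis.repr h (0,0,0), R.basis.repr h (0,0,1), R.basis.repr h (0,1,0),
    R.basis.repr h (0,1,1), R.basis.repr h (1,0,0), R.basis.repr h (1,0,1),
    R.basis.repr h (1,1,0), R.basis.repr h (1,1,1), ?_⟩
  have hs := R.basis.sum_repr h
  conv_lhs => rw [← hs]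
  simp only [Fintype.sum_prod_type, Fin.sum_univ_two]
  abel

set_option maxHeartbeats 4000000 in
lemma grouplike_cases (h : H) (hh : Coalgebra.comul (R := ℂ) h = h ⊗ₜ[ℂ] h) :
    h = 0 ∨ h = 1 ∨ h = R.g := by
  obtain ⟨c0, c1, c2, c3, c4, c5, c6, c7, hrep⟩ := R.hrep_exists h
  have key := hh
  rw [hrep] at key
  simp only [map_add, map_smul, R.comul_b000, R.comul_b001, R.comul_b010, R.comul_b011,
    R.comul_b100, R.comul_b101, R.comul_b110, R.comul_b111,
    TensorProduct.add_tmul, TensorProduct.tmul_add, TensorProduct.tmul_smul,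
    ← TensorProduct.smul_tmul', smul_smul] at key
  have pc := fun (a b : Fin 2 × Fin 2 × Fin 2) =>
    congrArg ((R.basis.tensorProduct R.basis).coord (a, b)) key
  have e1 := pc (0,0,0) (0,0,0)
  have e2 := pc (0,0,1) (0,0,1)
  have e3 := pc (0,0,0) (0,0,1)
  have e4 := pc (0,0,0) (0,1,0)
  have e5 := pc (0,1,0) (0,0,1)
  have e6 := pc (0,0,0) (1,0,0)
  have e7 := pc (1,0,0) (0,0,1)
  have e8 := pc (0,1,1) (0,0,0)
  have e9 := pc (0,0,1) (0,1,1)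
  have e10 := pc (1,0,1) (0,0,0)
  have e11 := pc (0,0,1) (1,0,1)
  have e12 := pc (1,1,0) (0,0,0)
  have e13 := pc (0,1,0) (1,0,1)
  have e14 := pc (1,1,1) (0,0,1)
  have e15 := pc (0,1,1) (1,0,0)
  clear pc key hh
  simp only [map_add, map_sub, map_smul, R.coord_tmul, smul_eq_mul, Prod.mk.injEq,
    Fin.reduceEq, and_true, true_and, and_false, false_and, and_self, ite_true, ite_false,
    reduceIte, mul_one, mul_zero, add_zero, zero_add, sub_zero, zero_sub, neg_zero,
    mul_neg, neg_neg] at e1 e2 e3 e4 e5 e6 e7 e8 e9 e10 e11 e12 e13 e14 e15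
  by_cases h0 : c0 = 0
  · have hc2 : c2 = 0 := by rw [e4, h0, mul_zero]
    have hc4 : c4 = 0 := by rw [e6, h0, mul_zero]
    have hc3 : c3 = 0 := by rw [e8, h0, zero_mul]
    have hc5 : c5 = 0 := by rw [e10, h0, zero_mul]
    have hc6 : c6 = 0 := by rw [e12, h0, zero_mul]
    have hc7 : c7 = 0 := by rw [e15, hc4, zero_mul]
    have hc1 : c1 = 0 ∨ c1 = 1 := by
      rcases mul_eq_zero.mp (show c1 * (c1 - 1) = 0 by linear_combination -e2) with h' | h'
      · exact Or.inl h'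
      · exact Or.inr (by linear_combination h')
    rcases hc1 with h1 | h1
    · left
      rw [hrep, h0, h1, hc2, hc3, hc4, hc5, hc6, hc7]
      simp
    · right; right
      rw [hrep, h0, h1, hc2, hc3, hc4, hc5, hc6, hc7, R.b001]
      simp
  · have h0' : c0 = 1 := by
      rcases mul_eq_zero.mp (show c0 * (c0 - 1) = 0 by linear_combination -e1) with h' | h'
      · exact absurd h' h0
      · linear_combination h'
    have hc1 : c1 = 0 := by
      have := e3; rw [h0', mul_one] at this; exact this.symm
    have hc2 : c2 = 0 := by rw [e5, hc1, zero_mul]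
    have hc4 : c4 = 0 := by rw [e7, hc1, zero_mul]
    have hc3 : c3 = 0 := by rw [e9, hc1, mul_zero]
    have hc5 : c5 = 0 := by rw [e11, hc1, mul_zero]
    have hc7 : c7 = 0 := by rw [e14, hc1, zero_mul]
    have hc6 : c6 = 0 := by rw [e13, hc5, zero_mul]
    right; left
    rw [hrep, h0', hc1, hc2, hc3, hc4, hc5, hc6, hc7, R.b000]
    simp

set_option maxHeartbeats 4000000 in
lemma skew_cases (w : H)
    (hw : Coalgebra.comul (R := ℂ) w = w ⊗ₜ[ℂ] R.g + (1 : H) ⊗ₜ[ℂ] w) :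
    ∃ a p q : ℂ, w = a • (1 : H) + (-a) • R.g + p • R.x + q • R.y := by
  obtain ⟨c0, c1, c2, c3, c4, c5, c6, c7, hrep⟩ := R.hrep_exists w
  have key := hw
  rw [hrep, ← R.b001, ← R.b000] at key
  simp only [map_add, map_smul, R.comul_b000, R.comul_b001, R.comul_b010, R.comul_b011,
    R.comul_b100, R.comul_b101, R.comul_b110, R.comul_b111,
    TensorProduct.add_tmul, TensorProduct.tmul_add, TensorProduct.tmul_smul,
    ← TensorProduct.smul_tmul', smul_smul] at key
  have pc := fun (a b : Fin 2 × Fin 2 × Fin 2) =>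
    congrArg ((R.basis.tensorProduct R.basis).coord (a, b)) key
  have e1 := pc (0,0,0) (0,0,1)
  have e2 := pc (0,1,1) (0,0,0)
  have e3 := pc (1,0,1) (0,0,0)
  have e4 := pc (1,1,0) (0,0,0)
  have e5 := pc (0,0,1) (1,1,1)
  clear pc key hw
  simp only [map_add, map_sub, map_smul, R.coord_tmul, smul_eq_mul, Prod.mk.injEq,
    Fin.reduceEq, and_true, true_and, and_false, false_and, and_self, ite_true, ite_false,
    reduceIte, mul_one, mul_zero, add_zero, zero_add, sub_zero, zero_sub, neg_zero,
    mul_neg, neg_neg] at e1 e2 e3 e4 e5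
  refine ⟨c0, c2, c4, ?_⟩
  have hc1 : c1 = -c0 := by linear_combination -e1
  rw [hrep, hc1, e2, e3, e4, e5, R.b000, R.b001, R.b010, R.b100]
  simp

lemma skew_sq (a p q : ℂ) :
    (a • (1 : H) + (-a) • R.g + p • R.x + q • R.y) *
      (a • (1 : H) + (-a) • R.g + p • R.x + q • R.y)
      = (2*a*a) • (1 : H) + (-(2*a*a)) • R.g + (2*a*p) • R.x + (2*a*q) • R.y := by
  simp only [add_mul, mul_add, smul_mul_assoc, mul_smul_comm, smul_smul,
    R.hGG, R.hXX, R.hYY, R.hGX, R.hGY, R.hXY, mul_one, one_mul, smul_zero,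
    smul_neg, neg_smul, neg_neg, neg_mul, mul_neg]
  module

end RadfordAlgebra

/-- for `n = 2`, every `*`-structure on the Radford algebra `H`
is of the form `g* = g`, `x* = α₁₁ x + α₁₂ y`, `y* = α₂₁ x + α₂₂ y` for some
matrix `A = (α_{ij}) ∈ M₂(ℂ)` with `Ā A = I₂`. -/
theorem radford_star_classification_of_eq_two
    {ω : ℂ} {H : Type*} [Ring H] [HopfAlgebra ℂ H]
    (R : RadfordAlgebra 2 ω H) (st : HopfStarStructure H) :
    ∃ A : Matrix (Fin 2) (Fin 2) ℂ, A.map (starRingEnd ℂ) * A = 1 ∧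
      st.star R.g = R.g ∧
      st.star R.x = A 0 0 • R.x + A 0 1 • R.y ∧
      st.star R.y = A 1 0 • R.x + A 1 1 • R.y := by
  have h1ne : (1 : H) ≠ 0 := R.b000 ▸ R.basis.ne_zero (0,0,0)
  have hgne : R.g ≠ 0 := R.b001 ▸ R.basis.ne_zero (0,0,1)
  have hg1 : R.g ≠ 1 := by
    intro hEq
    have : ((0,0,1) : Fin 2 × Fin 2 × Fin 2) = (0,0,0) :=
      R.basis.injective (by rw [R.b001, R.b000, hEq])
    simp at this
  have star0 : st.star 0 = 0 := by
    have := st.star_smul 0 1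
    simpa using this
  -- star 1 = 1
  have hstar1 : st.star 1 = 1 := by
    have hcomul1 : Coalgebra.comul (R := ℂ) (st.star 1) = st.star 1 ⊗ₜ[ℂ] st.star 1 := by
      rw [st.comul_star, Bialgebra.comul_one, Algebra.TensorProduct.one_def,
        st.starTensor_tmul]
    rcases R.grouplike_cases _ hcomul1 with h | h | h
    · exfalso
      have : (1 : H) = 0 := by rw [← st.star_star 1, h, star0]
      exact h1ne this
    · exact h
    · exfalso
      have h2 : st.star 1 * st.star 1 = st.star 1 := by
        rw [← st.star_mul, one_mul]
      rw [h, R.hGG] at h2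
      exact hg1 h2.symm
  -- star g = g
  have hstarg : st.star R.g = R.g := by
    have hcomulg : Coalgebra.comul (R := ℂ) (st.star R.g) = st.star R.g ⊗ₜ[ℂ] st.star R.g := by
      rw [st.comul_star, R.comul_g, st.starTensor_tmul]
    rcases R.grouplike_cases _ hcomulg with h | h | h
    · exfalso
      have : R.g = 0 := by rw [← st.star_star R.g, h, star0]
      exact hgne this
    · exfalso
      have : R.g = 1 := by rw [← st.star_star R.g, h, hstar1]
      exact hg1 this
    · exact h
  -- star x
  have hcomulx : Coalgebra.comul (R := ℂ) (st.star R.x)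
      = st.star R.x ⊗ₜ[ℂ] R.g + (1 : H) ⊗ₜ[ℂ] st.star R.x := by
    rw [st.comul_star, R.comul_x, st.starTensor_add, st.starTensor_tmul, st.starTensor_tmul,
      hstarg, hstar1]
  obtain ⟨a, p, q, hx⟩ := R.skew_cases _ hcomulx
  have hx2 : st.star R.x * st.star R.x = 0 := by
    rw [← st.star_mul, ← pow_two, R.x_pow, star0]
  rw [hx, R.skew_sq] at hx2
  have ha : a = 0 := by
    rw [← R.b000, ← R.b001, ← R.b010, ← R.b100] at hx2
    have e := congrArg (R.basis.coord (0,0,0)) hx2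
    simp only [map_add, map_smul, map_zero, R.coord_b, Prod.mk.injEq, Fin.reduceEq,
      and_true, true_and, and_false, false_and, and_self, ite_true, ite_false, reduceIte,
      smul_eq_mul, mul_one, mul_zero, add_zero, zero_add] at e
    have : (2 : ℂ) * a * a = 0 := e
    have h2 : (2 : ℂ) ≠ 0 := two_ne_zero
    rcases mul_eq_zero.mp this with h' | h'
    · rcases mul_eq_zero.mp h' with h'' | h''
      · exact absurd h'' h2
      · exact h''
    · exact h'
  have hx' : st.star R.x = p • R.x + q • R.y := by
    rw [hx, ha]; simp
  -- star y
  have hcomuly : Coalgebra.comul (R := ℂ) (st.star R.y)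
      = st.star R.y ⊗ₜ[ℂ] R.g + (1 : H) ⊗ₜ[ℂ] st.star R.y := by
    rw [st.comul_star, R.comul_y, st.starTensor_add, st.starTensor_tmul, st.starTensor_tmul,
      hstarg, hstar1]
  obtain ⟨a', p', q', hy⟩ := R.skew_cases _ hcomuly
  have hy2 : st.star R.y * st.star R.y = 0 := by
    rw [← st.star_mul, ← pow_two, R.y_pow, star0]
  rw [hy, R.skew_sq] at hy2
  have ha' : a' = 0 := by
    rw [← R.b000, ← R.b001, ← R.b010, ← R.b100] at hy2
    have e := congrArg (R.basis.coord (0,0,0)) hy2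
    simp only [map_add, map_smul, map_zero, R.coord_b, Prod.mk.injEq, Fin.reduceEq,
      and_true, true_and, and_false, false_and, and_self, ite_true, ite_false, reduceIte,
      smul_eq_mul, mul_one, mul_zero, add_zero, zero_add] at e
    have : (2 : ℂ) * a' * a' = 0 := e
    have h2 : (2 : ℂ) ≠ 0 := two_ne_zero
    rcases mul_eq_zero.mp this with h' | h'
    · rcases mul_eq_zero.mp h' with h'' | h''
      · exact absurd h'' h2
      · exact h''
    · exact h'
  have hy' : st.star R.y = p' • R.x + q' • R.y := by
    rw [hy, ha']; simp
  -- involution equations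
  have kx := st.star_star R.x
  rw [hx', st.star_add, st.star_smul, st.star_smul, hx', hy'] at kx
  have ky := st.star_star R.y
  rw [hy', st.star_add, st.star_smul, st.star_smul, hx', hy'] at ky
  -- kx : conj p • (p•x+q•y) + conj q • (p'•x+q'•y) = x
  have kx' : ((starRingEnd ℂ) p * p + (starRingEnd ℂ) q * p') • R.x
      + ((starRingEnd ℂ) p * q + (starRingEnd ℂ) q * q') • R.y = R.x := by
    refine Eq.trans ?_ kx
    module
  have ky' : ((starRingEnd ℂ) p' * p + (starRingEnd ℂ) q' * p') • R.x
      + ((starRingEnd ℂ) p' * q + (starRingEnd ℂ) q' * q') • R.y = R.y := by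
    refine Eq.trans ?_ ky
    module
  -- extract scalar equations
  have ext2 : ∀ u v : ℂ, u • R.x + v • R.y = R.x → u = 1 ∧ v = 0 := by
    intro u v hz
    have hz' : u • R.x + v • R.y - R.x = 0 := by rw [hz]; abel
    rw [← R.b010, ← R.b100] at hz'
    have e1 := congrArg (R.basis.coord (0,1,0)) hz'
    have e2 := congrArg (R.basis.coord (1,0,0)) hz'
    simp only [map_add, map_sub, map_smul, map_zero, R.coord_b, Prod.mk.injEq, Fin.reduceEq,
      and_true, true_and, and_false, false_and, and_self, ite_true, ite_false, reduceIte,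
      smul_eq_mul, mul_one, mul_zero, add_zero, zero_add, sub_zero, zero_sub] at e1 e2
    constructor
    · linear_combination e1
    · linear_combination e2
  have ext2' : ∀ u v : ℂ, u • R.x + v • R.y = R.y → u = 0 ∧ v = 1 := by
    intro u v hz
    have hz' : u • R.x + v • R.y - R.y = 0 := by rw [hz]; abel
    rw [← R.b010, ← R.b100] at hz'
    have e1 := congrArg (R.basis.coord (0,1,0)) hz'
    have e2 := congrArg (R.basis.coord (1,0,0)) hz'
    simp only [map_add, map_sub, map_smul, map_zero, R.coord_b, Prod.mk.injEq, Fin.reduceEq,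
      and_true, true_and, and_false, false_and, and_self, ite_true, ite_false, reduceIte,
      smul_eq_mul, mul_one, mul_zero, add_zero, zero_add, sub_zero, zero_sub] at e1 e2
    constructor
    · linear_combination e1
    · linear_combination e2
  obtain ⟨exx, exy⟩ := ext2 _ _ kx'
  obtain ⟨eyx, eyy⟩ := ext2' _ _ ky'
  refine ⟨!![p, q; p', q'], ?_, hstarg, ?_, ?_⟩
  · ext i j
    fin_cases i <;> fin_cases j <;>
      simp [Matrix.mul_apply, Fin.sum_univ_two, Matrix.map_apply, Matrix.one_apply] <;>
      [linear_combination exx; linear_combination exy; linear_combination eyx;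
        linear_combination eyy]
  · simpa using hx'
  · simpa using hy'
end
end

section
/- Assume n = 2. Let A, B ∈ M₂(ℂ) satisfy Ā·A = B̄·B = I₂, and let *_A and *_B be the corresponding *-structures on the Radford algebra H given by g^{*_A} = g, x^{*_A} = a₁₁x + a₁₂y, y^{*_A} = a₂₁x + a₂₂y (where A = (a_{ij})), and similarly for B. Then *_A and *_B are equivalent *-structures on H if and only if there exists an invertible matrix Λ ∈ M₂(ℂ) such that AΛ = Λ̄B, where Λ̄ denotes the entrywise complex conjugate of Λ. -/
open TensorProduct

noncomputable section

namespace RadAux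


local notation "conj" => starRingEnd ℂ

lemma det_aux (μ : ℂ) (M : Matrix (Fin 2) (Fin 2) ℂ) :
    (μ • (1 : Matrix (Fin 2) (Fin 2) ℂ) + (conj μ) • M).det
      = μ^2 + μ * conj μ * (M 0 0 + M 1 1) + (conj μ)^2 * M.det := by
  simp [Matrix.det_fin_two, Matrix.add_apply, Matrix.smul_apply, Matrix.one_apply]
  ring

lemma key_identity (A B : Matrix (Fin 2) (Fin 2) ℂ)
    (hA : A.map conj * A = 1) (hB : B.map conj * B = 1) (μ : ℂ) :
    A * (μ • 1 + (conj μ) • (A.map conj * B))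
      = (μ • 1 + (conj μ) • (A.map conj * B)).map conj * B := by
  have hA' : A * A.map conj = 1 := mul_eq_one_comm.mp hA
  have hmapmap : (A.map conj).map conj = A := by
    ext i j; simp [Matrix.map_apply]
  have h1 : ((μ • (1 : Matrix (Fin 2) (Fin 2) ℂ)).map conj) = conj μ • 1 := by
    ext i j; simp [Matrix.map_apply, Matrix.smul_apply, Matrix.one_apply, apply_ite (conj)]
  have h2 : ((conj μ • (A.map conj * B)).map conj) = μ • (A * B.map conj) := by
    ext i j
    simp [Matrix.map_apply, Matrix.smul_apply, Matrix.mul_apply, Fin.sum_univ_two, mul_add]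
  have hadd : ∀ X Y : Matrix (Fin 2) (Fin 2) ℂ, (X + Y).map conj = X.map conj + Y.map conj := by
    intro X Y; ext i j; simp [Matrix.map_apply]
  rw [hadd, h1, h2, mul_add, add_mul, Matrix.mul_smul, Matrix.smul_mul,
    Matrix.smul_mul, mul_one, one_mul, Matrix.mul_smul, ← Matrix.mul_assoc A,
    hA', one_mul, Matrix.mul_assoc A, hB, mul_one, add_comm]

lemma exists_L (A B : Matrix (Fin 2) (Fin 2) ℂ)
    (hA : A.map conj * A = 1) (hB : B.map conj * B = 1) :
    ∃ L : Matrix (Fin 2) (Fin 2) ℂ, IsUnit L ∧ A * L = L.map conj * B := by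
  set M := A.map conj * B with hM
  set t := M 0 0 + M 1 1 with ht
  set d := M.det with hd
  have hdet : ∀ μ : ℂ, (μ • (1 : Matrix (Fin 2) (Fin 2) ℂ) + (conj μ) • M).det
      = μ^2 + μ * conj μ * t + (conj μ)^2 * d := fun μ => det_aux μ M
  have huse : ∀ μ : ℂ, μ^2 + μ * conj μ * t + (conj μ)^2 * d ≠ 0 →
      ∃ L : Matrix (Fin 2) (Fin 2) ℂ, IsUnit L ∧ A * L = L.map conj * B := by
    intro μ hμ
    refine ⟨μ • 1 + (conj μ) • M, ?_, key_identity A B hA hB μ⟩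
    rw [Matrix.isUnit_iff_isUnit_det, hdet μ, isUnit_iff_ne_zero]
    exact hμ
  by_cases h1 : (1:ℂ) + t + d ≠ 0
  · refine huse 1 ?_
    simpa using h1
  · push_neg at h1
    by_cases h2 : (-1:ℂ) + t - d ≠ 0
    · refine huse Complex.I ?_
      have : Complex.I ^ 2 = -1 := Complex.I_sq
      rw [this]
      have hc : conj Complex.I = -Complex.I := Complex.conj_I
      rw [hc]
      have : Complex.I * -Complex.I = 1 := by
        rw [mul_neg, Complex.I_mul_I]; ring
      rw [this]
      have : (-Complex.I)^2 = -1 := by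
        rw [neg_pow]; simp [Complex.I_sq]
      rw [this]
      intro hcon
      apply h2
      linear_combination hcon
    · push_neg at h2
      refine huse (1 - Complex.I) ?_
      have hc : conj (1 - Complex.I) = 1 + Complex.I := by
        simp [map_sub, Complex.conj_I]
      rw [hc]
      have htd : t = 0 ∧ d = -1 := by
        constructor
        · linear_combination (h1 + h2) / 2
        · linear_combination (h1 - h2) / 2
      rw [htd.1, htd.2]
      have : (1 - Complex.I)^2 + (1-Complex.I)*(1+Complex.I)*0 + (1+Complex.I)^2 * (-1)
          = -4 * Complex.I := by
        ring
      rw [this]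
      simp [Complex.I_ne_zero]



variable {ω : ℂ} {H : Type*} [Ring H] [HopfAlgebra ℂ H] (R : RadfordAlgebra 2 ω H)

lemma omega_eq (R : RadfordAlgebra 2 ω H) : ω = -1 :=
  IsPrimitiveRoot.eq_neg_one_of_two_right R.hω

lemma smul_omega (R : RadfordAlgebra 2 ω H) (z : H) : ω • z = -z := by
  rw [omega_eq R, neg_smul, one_smul]

lemma gg : R.g * R.g = 1 := by have h := R.g_pow; rwa [pow_two] at h
lemma xx : R.x * R.x = 0 := by have h := R.x_pow; rwa [pow_two] at h
lemma yy : R.y * R.y = 0 := by have h := R.y_pow; rwa [pow_two] at h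

lemma gx : R.g * R.x = -(R.x * R.g) := by
  have h := R.rel_xg; rw [smul_omega R] at h; rw [h, neg_neg]

lemma gy : R.g * R.y = -(R.y * R.g) := by
  have h := R.rel_gy; rwa [smul_omega R] at h

lemma xy : R.x * R.y = -(R.y * R.x) := by
  have h := R.rel_xy; rwa [smul_omega R] at h

lemma gg' (z : H) : R.g * (R.g * z) = z := by rw [← mul_assoc, gg, one_mul]
lemma xx' (z : H) : R.x * (R.x * z) = 0 := by rw [← mul_assoc, xx, zero_mul]
lemma yy' (z : H) : R.y * (R.y * z) = 0 := by rw [← mul_assoc, yy, zero_mul]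
lemma gx' (z : H) : R.g * (R.x * z) = -(R.x * (R.g * z)) := by
  rw [← mul_assoc, gx, ← mul_assoc, neg_mul]
lemma gy' (z : H) : R.g * (R.y * z) = -(R.y * (R.g * z)) := by
  rw [← mul_assoc, gy, ← mul_assoc, neg_mul]
lemma xy' (z : H) : R.x * (R.y * z) = -(R.y * (R.x * z)) := by
  rw [← mul_assoc, xy, ← mul_assoc, neg_mul]

lemma b000 : R.basis (0,0,0) = 1 := by rw [R.basis_eq]; simp
lemma b001 : R.basis (0,0,1) = R.g := by rw [R.basis_eq]; simp
lemma b010 : R.basis (0,1,0) = R.x := by rw [R.basis_eq]; simp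
lemma b011 : R.basis (0,1,1) = R.x * R.g := by rw [R.basis_eq]; simp
lemma b100 : R.basis (1,0,0) = R.y := by rw [R.basis_eq]; simp
lemma b101 : R.basis (1,0,1) = R.y * R.g := by rw [R.basis_eq]; simp
lemma b110 : R.basis (1,1,0) = R.y * R.x := by rw [R.basis_eq]; simp
lemma b111 : R.basis (1,1,1) = R.y * (R.x * R.g) := by
  rw [R.basis_eq]; simp [mul_assoc]




variable {ω : ℂ} {H : Type*} [Ring H] [HopfAlgebra ℂ H] (R : RadfordAlgebra 2 ω H)

lemma cm_xg : Coalgebra.comul (R := ℂ) (R.x * R.g)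
    = (R.x * R.g) ⊗ₜ[ℂ] 1 + R.g ⊗ₜ[ℂ] (R.x * R.g) := by
  rw [Bialgebra.comul_mul, R.comul_x, R.comul_g, add_mul,
    Algebra.TensorProduct.tmul_mul_tmul, Algebra.TensorProduct.tmul_mul_tmul,
    gg R, one_mul]

lemma cm_yg : Coalgebra.comul (R := ℂ) (R.y * R.g)
    = (R.y * R.g) ⊗ₜ[ℂ] 1 + R.g ⊗ₜ[ℂ] (R.y * R.g) := by
  rw [Bialgebra.comul_mul, R.comul_y, R.comul_g, add_mul,
    Algebra.TensorProduct.tmul_mul_tmul, Algebra.TensorProduct.tmul_mul_tmul,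
    gg R, one_mul]

lemma cm_yx : Coalgebra.comul (R := ℂ) (R.y * R.x)
    = (R.y * R.x) ⊗ₜ[ℂ] 1 - R.y ⊗ₜ[ℂ] (R.x * R.g) + R.x ⊗ₜ[ℂ] (R.y * R.g)
      + 1 ⊗ₜ[ℂ] (R.y * R.x) := by
  rw [Bialgebra.comul_mul, R.comul_y, R.comul_x]
  simp only [add_mul, mul_add, Algebra.TensorProduct.tmul_mul_tmul,
    gg R, gx R, one_mul, mul_one, TensorProduct.tmul_neg]
  abel

lemma cm_yxg : Coalgebra.comul (R := ℂ) (R.y * (R.x * R.g))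
    = (R.y * (R.x * R.g)) ⊗ₜ[ℂ] R.g - (R.y * R.g) ⊗ₜ[ℂ] R.x
      + (R.x * R.g) ⊗ₜ[ℂ] R.y + R.g ⊗ₜ[ℂ] (R.y * (R.x * R.g)) := by
  have h : R.y * (R.x * R.g) = (R.y * R.x) * R.g := by rw [mul_assoc]
  rw [h, Bialgebra.comul_mul, cm_yx R, R.comul_g]
  simp only [add_mul, sub_mul, Algebra.TensorProduct.tmul_mul_tmul, one_mul,
    mul_assoc, gg R, mul_one]

lemma ct_xg : Coalgebra.counit (R := ℂ) (R.x * R.g) = 0 := by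
  rw [Bialgebra.counit_mul, R.counit_x, zero_mul]
lemma ct_yg : Coalgebra.counit (R := ℂ) (R.y * R.g) = 0 := by
  rw [Bialgebra.counit_mul, R.counit_y, zero_mul]
lemma ct_yx : Coalgebra.counit (R := ℂ) (R.y * R.x) = 0 := by
  rw [Bialgebra.counit_mul, R.counit_y, zero_mul]
lemma ct_yxg : Coalgebra.counit (R := ℂ) (R.y * (R.x * R.g)) = 0 := by
  rw [Bialgebra.counit_mul, R.counit_y, zero_mul]




variable {ω : ℂ} {H : Type*} [Ring H] [HopfAlgebra ℂ H]

def im (R : RadfordAlgebra 2 ω H) (L : Matrix (Fin 2) (Fin 2) ℂ) :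
    Fin 2 × Fin 2 × Fin 2 → H := fun p =>
  ![![fun l => R.basis (0,0,l),
      fun l => L 0 0 • R.basis (0,1,l) + L 0 1 • R.basis (1,0,l)],
    ![fun l => L 1 0 • R.basis (0,1,l) + L 1 1 • R.basis (1,0,l),
      fun l => (L 0 0 * L 1 1 - L 0 1 * L 1 0) • R.basis (1,1,l)]] p.1 p.2.1 p.2.2

def psiL (R : RadfordAlgebra 2 ω H) (L : Matrix (Fin 2) (Fin 2) ℂ) : H →ₗ[ℂ] H :=
  R.basis.constr ℂ (im R L)

variable (R : RadfordAlgebra 2 ω H) (L : Matrix (Fin 2) (Fin 2) ℂ)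

lemma psiB (p : Fin 2 × Fin 2 × Fin 2) : psiL R L (R.basis p) = im R L p :=
  Module.Basis.constr_basis _ _ _ _

lemma psi_one : psiL R L (1 : H) = 1 := by
  conv_lhs => rw [← b000 R]
  rw [psiB]; simp only [im, Matrix.cons_val_zero]; exact b000 R

lemma psi_g : psiL R L R.g = R.g := by
  conv_lhs => rw [← b001 R]
  rw [psiB]; simp only [im, Matrix.cons_val_zero, Matrix.cons_val_one, Matrix.head_cons]; exact b001 R

lemma psi_x : psiL R L R.x = L 0 0 • R.x + L 0 1 • R.y := by
  conv_lhs => rw [← b010 R]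
  rw [psiB]; simp only [im, Matrix.cons_val_zero, Matrix.cons_val_one, Matrix.head_cons]; rw [b010 R, b100 R]

lemma psi_y : psiL R L R.y = L 1 0 • R.x + L 1 1 • R.y := by
  conv_lhs => rw [← b100 R]
  rw [psiB]; simp only [im, Matrix.cons_val_zero, Matrix.cons_val_one, Matrix.head_cons]; rw [b010 R, b100 R]

lemma psi_xg : psiL R L (R.x * R.g) = L 0 0 • (R.x * R.g) + L 0 1 • (R.y * R.g) := by
  conv_lhs => rw [← b011 R]
  rw [psiB]; simp only [im, Matrix.cons_val_zero, Matrix.cons_val_one, Matrix.head_cons]; rw [b011 R, b101 R]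

lemma psi_yg : psiL R L (R.y * R.g) = L 1 0 • (R.x * R.g) + L 1 1 • (R.y * R.g) := by
  conv_lhs => rw [← b101 R]
  rw [psiB]; simp only [im, Matrix.cons_val_zero, Matrix.cons_val_one, Matrix.head_cons]
  rw [b011 R, b101 R]

lemma psi_yx : psiL R L (R.y * R.x) = (L 0 0 * L 1 1 - L 0 1 * L 1 0) • (R.y * R.x) := by
  conv_lhs => rw [← b110 R]
  rw [psiB]; simp only [im, Matrix.cons_val_zero, Matrix.cons_val_one, Matrix.head_cons]; rw [b110 R]

lemma psi_yxg : psiL R L (R.y * (R.x * R.g))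
    = (L 0 0 * L 1 1 - L 0 1 * L 1 0) • (R.y * (R.x * R.g)) := by
  conv_lhs => rw [← b111 R]
  rw [psiB]; simp only [im, Matrix.cons_val_zero, Matrix.cons_val_one, Matrix.head_cons]; rw [b111 R]




variable {ω : ℂ} {H : Type*} [Ring H] [HopfAlgebra ℂ H]
variable (R : RadfordAlgebra 2 ω H) (L : Matrix (Fin 2) (Fin 2) ℂ)

lemma psi_mul (u v : H) : psiL R L (u * v) = psiL R L u * psiL R L v := by
  have h : (LinearMap.mul ℂ H).compr₂ (psiL R L)
      = (LinearMap.mul ℂ H).compl₁₂ (psiL R L) (psiL R L) := by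
    refine R.basis.ext fun i => R.basis.ext fun j => ?_
    simp only [LinearMap.compr₂_apply, LinearMap.compl₁₂_apply, LinearMap.mul_apply']
    fin_cases i <;> fin_cases j <;>
      simp only [Fin.zero_eta, Fin.mk_one, Fin.isValue] <;>
      (try simp only [b000 R, b001 R, b010 R, b011 R, b100 R, b101 R, b110 R, b111 R]) <;>
      (try simp only [mul_assoc, gg R, gg' R, xx R, xx' R, yy R, yy' R, gx R, gx' R,
        gy R, gy' R, xy R, xy' R, one_mul, mul_one, mul_neg, neg_mul, neg_neg,
        mul_zero, zero_mul, neg_zero, smul_mul_assoc, mul_smul_comm, add_mul, mul_add,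
        smul_add, smul_neg, smul_zero, smul_smul, add_zero, zero_add,
        map_add, map_smul, map_neg, map_zero,
        psi_one R L, psi_g R L, psi_x R L, psi_y R L, psi_xg R L, psi_yg R L,
        psi_yx R L, psi_yxg R L]) <;>
      (try module)
  have h2 := LinearMap.congr_fun (LinearMap.congr_fun h u) v
  simpa using h2




variable {ω : ℂ} {H : Type*} [Ring H] [HopfAlgebra ℂ H]

def Linv (L : Matrix (Fin 2) (Fin 2) ℂ) : Matrix (Fin 2) (Fin 2) ℂ :=
  !![L 1 1 / L.det, -(L 0 1) / L.det; -(L 1 0) / L.det, L 0 0 / L.det]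

variable (R : RadfordAlgebra 2 ω H) (L : Matrix (Fin 2) (Fin 2) ℂ)

lemma comp1 (hd : L.det ≠ 0) : psiL R L ∘ₗ psiL R (Linv L) = LinearMap.id := by
  have hd' : L 0 0 * L 1 1 - L 0 1 * L 1 0 ≠ 0 := by
    rwa [Matrix.det_fin_two] at hd
  refine R.basis.ext fun i => ?_
  fin_cases i <;>
    simp only [LinearMap.comp_apply, LinearMap.id_apply, Fin.zero_eta, Fin.mk_one,
      Fin.isValue] <;>
    simp only [b000 R, b001 R, b010 R, b011 R, b100 R, b101 R, b110 R, b111 R] <;>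
    simp only [map_add, map_smul, psi_one, psi_g, psi_x, psi_y, psi_xg, psi_yg,
      psi_yx, psi_yxg, smul_add, smul_smul, Linv, Matrix.cons_val', Matrix.cons_val_zero,
      Matrix.cons_val_one, Matrix.head_cons, Matrix.head_fin_const, Matrix.empty_val',
      Matrix.cons_val_fin_one, Matrix.of_apply, Matrix.det_fin_two] <;>
    (try match_scalars) <;> (try field_simp) <;> (try ring) <;> (try (left; trivial)) <;>
    (try (have h3 : L 1 1 * L 0 0 - L 0 1 * L 1 0 ≠ 0 := fun h => hd' (by linear_combination h); have h4 : -(L 1 0 * L 0 1) + L 0 0 * L 1 1 ≠ 0 := fun h => hd' (by linear_combination h); field_simp <;> ring))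

lemma comp2 (hd : L.det ≠ 0) : psiL R (Linv L) ∘ₗ psiL R L = LinearMap.id := by
  have hd' : L 0 0 * L 1 1 - L 0 1 * L 1 0 ≠ 0 := by
    rwa [Matrix.det_fin_two] at hd
  refine R.basis.ext fun i => ?_
  fin_cases i <;>
    simp only [LinearMap.comp_apply, LinearMap.id_apply, Fin.zero_eta, Fin.mk_one,
      Fin.isValue] <;>
    simp only [b000 R, b001 R, b010 R, b011 R, b100 R, b101 R, b110 R, b111 R] <;>
    simp only [map_add, map_smul, psi_one, psi_g, psi_x, psi_y, psi_xg, psi_yg,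
      psi_yx, psi_yxg, smul_add, smul_smul, Linv, Matrix.cons_val', Matrix.cons_val_zero,
      Matrix.cons_val_one, Matrix.head_cons, Matrix.head_fin_const, Matrix.empty_val',
      Matrix.cons_val_fin_one, Matrix.of_apply, Matrix.det_fin_two] <;>
    (try match_scalars) <;> (try field_simp) <;> (try ring) <;> (try (left; trivial)) <;>
    (try (have h3 : L 1 1 * L 0 0 - L 0 1 * L 1 0 ≠ 0 := fun h => hd' (by linear_combination h); have h4 : -(L 1 0 * L 0 1) + L 0 0 * L 1 1 ≠ 0 := fun h => hd' (by linear_combination h); field_simp <;> ring))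




variable {ω : ℂ} {H : Type*} [Ring H] [HopfAlgebra ℂ H]
variable (R : RadfordAlgebra 2 ω H) (L : Matrix (Fin 2) (Fin 2) ℂ)

lemma counit_comp_psi :
    (Coalgebra.counit : H →ₗ[ℂ] ℂ) ∘ₗ psiL R L = Coalgebra.counit := by
  refine R.basis.ext fun i => ?_
  fin_cases i <;>
    simp only [LinearMap.comp_apply, Fin.zero_eta, Fin.mk_one, Fin.isValue] <;>
    simp only [b000 R, b001 R, b010 R, b011 R, b100 R, b101 R, b110 R, b111 R] <;>
    simp only [psi_one, psi_g, psi_x, psi_y, psi_xg, psi_yg, psi_yx, psi_yxg,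
      map_add, map_smul, Bialgebra.counit_one, R.counit_g, R.counit_x, R.counit_y,
      ct_xg R, ct_yg R, ct_yx R, ct_yxg R, smul_zero, add_zero, zero_add, smul_eq_mul,
      mul_zero, mul_one]

lemma map_comp_comul_psi :
    TensorProduct.map (psiL R L) (psiL R L) ∘ₗ (Coalgebra.comul : H →ₗ[ℂ] H ⊗[ℂ] H)
      = Coalgebra.comul ∘ₗ psiL R L := by
  refine R.basis.ext fun i => ?_
  fin_cases i <;>
    simp only [LinearMap.comp_apply, Fin.zero_eta, Fin.mk_one, Fin.isValue] <;>
    simp only [b000 R, b001 R, b010 R, b011 R, b100 R, b101 R, b110 R, b111 R] <;>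
    simp only [psi_one, psi_g, psi_x, psi_y, psi_xg, psi_yg, psi_yx, psi_yxg,
      map_add, map_smul, map_sub, Bialgebra.comul_one, R.comul_g, R.comul_x, R.comul_y,
      cm_xg R, cm_yg R, cm_yx R, cm_yxg R, Algebra.TensorProduct.one_def,
      TensorProduct.map_tmul, TensorProduct.tmul_add, TensorProduct.add_tmul,
      TensorProduct.tmul_smul, ← TensorProduct.smul_tmul', TensorProduct.tmul_neg,
      TensorProduct.neg_tmul, TensorProduct.tmul_sub, TensorProduct.sub_tmul,
      smul_add, smul_smul, smul_sub] <;>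
    (try module)

def psiBialg (hd : L.det ≠ 0) : H ≃ₐc[ℂ] H where
  toCoalgHom :=
    { toLinearMap := psiL R L
      counit_comp := counit_comp_psi R L
      map_comp_comul := map_comp_comul_psi R L }
  invFun := psiL R (Linv L)
  left_inv := fun h => LinearMap.congr_fun (comp2 R L hd) h
  right_inv := fun h => LinearMap.congr_fun (comp1 R L hd) h
  map_mul' := psi_mul R L

lemma psiBialg_apply (hd : L.det ≠ 0) (h : H) : psiBialg R L hd h = psiL R L h := rfl




variable {ω : ℂ} {H : Type*} [Ring H] [HopfAlgebra ℂ H]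

lemma star_one' (s : HopfStarStructure H) : s.star 1 = 1 := by
  have h := s.star_mul (s.star 1) 1
  rw [mul_one, s.star_star] at h
  rw [mul_one] at h
  exact h.symm

lemma equivalent_of_L (R : RadfordAlgebra 2 ω H) (A B : Matrix (Fin 2) (Fin 2) ℂ)
    (stA stB : HopfStarStructure H)
    (hstA : stA.star R.g = R.g ∧
      stA.star R.x = A 0 0 • R.x + A 0 1 • R.y ∧
      stA.star R.y = A 1 0 • R.x + A 1 1 • R.y)
    (hstB : stB.star R.g = R.g ∧
      stB.star R.x = B 0 0 • R.x + B 0 1 • R.y ∧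
      stB.star R.y = B 1 0 • R.x + B 1 1 • R.y)
    (L : Matrix (Fin 2) (Fin 2) ℂ) (hL : IsUnit L)
    (hLB : A * L = L.map (starRingEnd ℂ) * B) :
    stA.Equivalent stB := by
  have hd : L.det ≠ 0 := by
    have := (Matrix.isUnit_iff_isUnit_det L).mp hL
    exact this.ne_zero
  have hE : ∀ i j, (A * L) i j = (L.map (starRingEnd ℂ) * B) i j := fun i j => by rw [hLB]
  have e00 := hE 0 0; have e01 := hE 0 1; have e10 := hE 1 0; have e11 := hE 1 1
  simp only [Matrix.mul_apply, Fin.sum_univ_two, Matrix.map_apply] at e00 e01 e10 e11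
  refine ⟨psiBialg R L hd, ?_⟩
  have hmem : ∀ h : H, h ∈ Algebra.adjoin ℂ ({R.g, R.x, R.y} : Set H) := by
    intro h
    have : h ∈ (⊤ : Subalgebra ℂ H) := trivial
    rwa [← R.gen] at this
  intro h
  refine Algebra.adjoin_induction ?_ ?_ ?_ ?_ (hmem h)
  · intro z hz
    simp only [Set.mem_insert_iff, Set.mem_singleton_iff] at hz
    rcases hz with rfl | rfl | rfl
    · rw [psiBialg_apply, psiBialg_apply, hstA.1, psi_g, hstB.1]
    · rw [psiBialg_apply, psiBialg_apply, hstA.2.1]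
      simp only [map_add, map_smul, psi_x, psi_y, stB.star_add, stB.star_smul,
        hstB.2.1, hstB.2.2, smul_add, smul_smul]
      match_scalars <;> first
        | linear_combination e00
        | linear_combination e01
    · rw [psiBialg_apply, psiBialg_apply, hstA.2.2]
      simp only [map_add, map_smul, psi_x, psi_y, stB.star_add, stB.star_smul,
        hstB.2.1, hstB.2.2, smul_add, smul_smul]
      match_scalars <;> first
        | linear_combination e10
        | linear_combination e11
  · intro c
    rw [psiBialg_apply, psiBialg_apply, Algebra.algebraMap_eq_smul_one, stA.star_smul,
      star_one', map_smul, map_smul, psi_one, stB.star_smul, star_one']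
  · intro u v _ _ h1 h2
    rw [psiBialg_apply, psiBialg_apply, stA.star_add, map_add, map_add, stB.star_add,
      ← psiBialg_apply R L hd, ← psiBialg_apply R L hd (stA.star v), h1, h2,
      psiBialg_apply, psiBialg_apply]
  · intro u v _ _ h1 h2
    rw [psiBialg_apply, psiBialg_apply, stA.star_mul, psi_mul, psi_mul, stB.star_mul,
      ← psiBialg_apply R L hd (stA.star v), ← psiBialg_apply R L hd (stA.star u), h1, h2,
      psiBialg_apply, psiBialg_apply]


end RadAux

/-- for `n = 2`, the `*`-structures `*_A` and `*_B` determined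
by matrices `A, B ∈ M₂(ℂ)` with `Ā A = B̄ B = I₂` are equivalent iff there is
an invertible `Λ ∈ M₂(ℂ)` with `A Λ = Λ̄ B`. -/
theorem radford_star_equivalence_iff
    {ω : ℂ} {H : Type*} [Ring H] [HopfAlgebra ℂ H]
    (R : RadfordAlgebra 2 ω H) (A B : Matrix (Fin 2) (Fin 2) ℂ)
    (hA : A.map (starRingEnd ℂ) * A = 1) (hB : B.map (starRingEnd ℂ) * B = 1)
    (stA stB : HopfStarStructure H)
    (hstA : stA.star R.g = R.g ∧
      stA.star R.x = A 0 0 • R.x + A 0 1 • R.y ∧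
      stA.star R.y = A 1 0 • R.x + A 1 1 • R.y)
    (hstB : stB.star R.g = R.g ∧
      stB.star R.x = B 0 0 • R.x + B 0 1 • R.y ∧
      stB.star R.y = B 1 0 • R.x + B 1 1 • R.y) :
    stA.Equivalent stB ↔
      ∃ L : Matrix (Fin 2) (Fin 2) ℂ, IsUnit L ∧ A * L = L.map (starRingEnd ℂ) * B := by
  constructor
  · intro _
    exact RadAux.exists_L A B hA hB
  · rintro ⟨L, hL, hLB⟩
    exact RadAux.equivalent_of_L R A B stA stB hstA hstB L hL hLB
end
end

section
/- Let λ₁, λ₂ ∈ ℂ be nonzero. Then there exists a Hopf algebra automorphism φ of the Radford algebra H (a bijective ℂ-algebra homomorphism that is also a coalgebra homomorphism) such that φ(g) = g, φ(x) = λ₁x, and φ(y) = λ₂y. -/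
open TensorProduct

noncomputable section

namespace RadfordAux

variable {n : ℕ} {ω : ℂ} {H : Type*} [Ring H] [HopfAlgebra ℂ H]

lemma ctx_smul {c : ℂ} {a b : H} (h : a * b = c • (b * a)) (z : H) :
    a * (b * z) = c • (b * (a * z)) := by
  rw [← mul_assoc, h, smul_mul_assoc, mul_assoc]

lemma qcomm_one {c : ℂ} {a b : H} (h : a * b = c • (b * a)) (l : ℕ) :
    a * b ^ l = c ^ l • (b ^ l * a) := by
  induction l with
  | zero => simp
  | succ l ih =>
    calc a * b ^ (l + 1) = (a * b ^ l) * b := by rw [pow_succ, mul_assoc]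
      _ = c ^ l • (b ^ l * (a * b)) := by rw [ih, smul_mul_assoc, mul_assoc]
      _ = c ^ l • (b ^ l * (c • (b * a))) := by rw [h]
      _ = (c ^ l * c) • (b ^ l * b * a) := by
          rw [mul_smul_comm, smul_smul, mul_assoc]
      _ = c ^ (l + 1) • (b ^ (l + 1) * a) := by rw [← pow_succ, ← pow_succ]

lemma qcomm {c : ℂ} {a b : H} (h : a * b = c • (b * a)) (s l : ℕ) :
    a ^ s * b ^ l = c ^ (s * l) • (b ^ l * a ^ s) := by
  induction s with
  | zero => simp
  | succ s ih =>
    calc a ^ (s + 1) * b ^ l = a ^ s * (a * b ^ l) := by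
          rw [pow_succ, mul_assoc]
      _ = c ^ l • (a ^ s * b ^ l * a) := by
          rw [qcomm_one h, mul_smul_comm, mul_assoc]
      _ = (c ^ l * c ^ (s * l)) • (b ^ l * a ^ s * a) := by
          rw [ih, smul_mul_assoc, smul_smul]
      _ = c ^ ((s + 1) * l) • (b ^ l * a ^ (s + 1)) := by
          rw [← pow_add, mul_assoc, ← pow_succ]
          ring_nf

lemma mono_mul (R : RadfordAlgebra n ω H) (r s l r' s' l' : ℕ) :
    ∃ c : ℂ, R.y ^ r * R.x ^ s * R.g ^ l * (R.y ^ r' * R.x ^ s' * R.g ^ l') =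
      c • (R.y ^ (r + r') * R.x ^ (s + s') * R.g ^ (l + l')) := by
  have hω0 : ω ≠ 0 := R.hω.ne_zero (by have := R.hn; omega)
  have hgy := qcomm R.rel_gy l r'
  have hxy := qcomm R.rel_xy s r'
  have hxg := qcomm R.rel_xg s' l
  have hgx : R.g ^ l * R.x ^ s' = (ω ^ (s' * l))⁻¹ • (R.x ^ s' * R.g ^ l) := by
    rw [hxg, smul_smul, inv_mul_cancel₀ (pow_ne_zero _ hω0), one_smul]
  refine ⟨ω ^ (l * r') * ω ^ (s * r') * (ω ^ (s' * l))⁻¹, ?_⟩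
  simp only [mul_assoc, pow_add]
  rw [ctx_smul hgy, mul_smul_comm, mul_smul_comm, ctx_smul hxy, mul_smul_comm,
    smul_smul, ctx_smul hgx, mul_smul_comm, mul_smul_comm, mul_smul_comm,
    smul_smul]
  rw [mul_assoc]

variable (R : RadfordAlgebra n ω H)

/-- Scalar by which the automorphism scales each basis vector. -/
def sc (l₁ l₂ : ℂ) (i : Fin n × Fin n × Fin n) : ℂ :=
  l₂ ^ (i.1 : ℕ) * l₁ ^ (i.2.1 : ℕ)

/-- The linear map scaling each basis vector. -/
def phiLin (l₁ l₂ : ℂ) : H →ₗ[ℂ] H :=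
  R.basis.constr ℂ (fun i => sc l₁ l₂ i • R.basis i)

lemma phiLin_basis (l₁ l₂ : ℂ) (i : Fin n × Fin n × Fin n) :
    phiLin R l₁ l₂ (R.basis i) = sc l₁ l₂ i • R.basis i :=
  Module.Basis.constr_basis _ _ _ _

lemma g_pow_mod (l : ℕ) : R.g ^ l = R.g ^ (l % n) := by
  conv_lhs => rw [← Nat.div_add_mod l n]
  rw [pow_add, pow_mul, R.g_pow, one_pow, one_mul]

lemma phiLin_mono (l₁ l₂ : ℂ) (r s l : ℕ) :
    phiLin R l₁ l₂ (R.y ^ r * R.x ^ s * R.g ^ l) =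
      (l₂ ^ r * l₁ ^ s) • (R.y ^ r * R.x ^ s * R.g ^ l) := by
  have hn0 : 0 < n := by have := R.hn; omega
  by_cases hr : r < n
  · by_cases hs : s < n
    · have hl : l % n < n := Nat.mod_lt _ hn0
      have hb : R.y ^ r * R.x ^ s * R.g ^ l =
          R.basis (⟨r, hr⟩, ⟨s, hs⟩, ⟨l % n, hl⟩) := by
        rw [R.basis_eq, g_pow_mod R l]
      rw [hb, phiLin_basis]
      simp [sc]
    · have hx0 : R.x ^ s = 0 := by
        obtain ⟨k, rfl⟩ : ∃ k, s = n + k := ⟨s - n, by omega⟩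
        rw [pow_add, R.x_pow, zero_mul]
      simp [hx0]
  · have hy0 : R.y ^ r = 0 := by
      obtain ⟨k, rfl⟩ : ∃ k, r = n + k := ⟨r - n, by omega⟩
      rw [pow_add, R.y_pow, zero_mul]
    simp [hy0]

lemma phiLin_one (l₁ l₂ : ℂ) : phiLin R l₁ l₂ 1 = 1 := by
  have := phiLin_mono R l₁ l₂ 0 0 0
  simpa using this

lemma phiLin_mul (l₁ l₂ : ℂ) (a b : H) :
    phiLin R l₁ l₂ (a * b) = phiLin R l₁ l₂ a * phiLin R l₁ l₂ b := by
  set φ := phiLin R l₁ l₂ with hφ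
  have key : ∀ i j, φ (R.basis i * R.basis j) = φ (R.basis i) * φ (R.basis j) := by
    rintro ⟨r, s, l⟩ ⟨r', s', l'⟩
    rw [R.basis_eq, R.basis_eq]
    obtain ⟨c, hc⟩ := mono_mul R r s l r' s' l'
    rw [hc, map_smul, hφ, phiLin_mono, phiLin_mono, phiLin_mono,
      smul_mul_assoc, mul_smul_comm, hc, smul_smul, smul_smul, smul_smul]
    congr 1
    ring
  have hext : (LinearMap.mul ℂ H).compr₂ φ =
      ((LinearMap.mul ℂ H).compl₁₂ φ φ) := by
    apply R.basis.ext; intro i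
    apply R.basis.ext; intro j
    simpa using key i j
  simpa using LinearMap.congr_fun (LinearMap.congr_fun hext a) b

lemma phiLin_comp (l₁ l₂ : ℂ) (h₁ : l₁ ≠ 0) (h₂ : l₂ ≠ 0) :
    (phiLin R l₁ l₂) ∘ₗ (phiLin R l₁⁻¹ l₂⁻¹) = LinearMap.id := by
  apply R.basis.ext; intro i
  simp only [LinearMap.comp_apply, phiLin_basis, map_smul, LinearMap.id_apply,
    smul_smul]
  convert one_smul ℂ (R.basis i) using 2
  simp only [sc, inv_pow]
  field_simp

lemma phiLin_g (l₁ l₂ : ℂ) : phiLin R l₁ l₂ R.g = R.g := by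
  have := phiLin_mono R l₁ l₂ 0 0 1
  simpa using this

lemma phiLin_x (l₁ l₂ : ℂ) : phiLin R l₁ l₂ R.x = l₁ • R.x := by
  have := phiLin_mono R l₁ l₂ 0 1 0
  simpa using this

lemma phiLin_y (l₁ l₂ : ℂ) : phiLin R l₁ l₂ R.y = l₂ • R.y := by
  have := phiLin_mono R l₁ l₂ 1 0 0
  simpa using this

end RadfordAux

/-- for nonzero `λ₁, λ₂ ∈ ℂ` there is a Hopf algebra
automorphism `φ` of the Radford algebra `H` with `φ(g) = g`, `φ(x) = λ₁ x`,
`φ(y) = λ₂ y`. -/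
theorem radford_automorphism_of_scalars
    {n : ℕ} {ω : ℂ} {H : Type*} [Ring H] [HopfAlgebra ℂ H]
    (R : RadfordAlgebra n ω H) (l₁ l₂ : ℂ) (h₁ : l₁ ≠ 0) (h₂ : l₂ ≠ 0) :
    ∃ φ : H ≃ₐc[ℂ] H, φ R.g = R.g ∧ φ R.x = l₁ • R.x ∧ φ R.y = l₂ • R.y := by
  classical
  set φl := RadfordAux.phiLin R l₁ l₂ with hφl
  set ψl := RadfordAux.phiLin R l₁⁻¹ l₂⁻¹ with hψl
  have hφψ : φl ∘ₗ ψl = LinearMap.id := RadfordAux.phiLin_comp R l₁ l₂ h₁ h₂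
  have hψφ : ψl ∘ₗ φl = LinearMap.id := by
    have := RadfordAux.phiLin_comp R l₁⁻¹ l₂⁻¹ (inv_ne_zero h₁) (inv_ne_zero h₂)
    rwa [inv_inv, inv_inv] at this
  have hone : φl 1 = 1 := RadfordAux.phiLin_one R l₁ l₂
  have hmul : ∀ a b : H, φl (a * b) = φl a * φl b := RadfordAux.phiLin_mul R l₁ l₂
  have hg : φl R.g = R.g := RadfordAux.phiLin_g R l₁ l₂
  have hx : φl R.x = l₁ • R.x := RadfordAux.phiLin_x R l₁ l₂
  have hy : φl R.y = l₂ • R.y := RadfordAux.phiLin_y R l₁ l₂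
  -- package as an algebra hom
  let Aφ : H →ₐ[ℂ] H := AlgHom.ofLinearMap φl hone hmul
  have hAφ : ∀ a : H, Aφ a = φl a := fun _ => rfl
  -- pointwise equality of two algebra homs via the generating set
  have keyEq : ∀ (F₁ F₂ : H →ₐ[ℂ] H ⊗[ℂ] H), F₁ R.g = F₂ R.g → F₁ R.x = F₂ R.x →
      F₁ R.y = F₂ R.y → ∀ a, F₁ a = F₂ a := by
    intro F₁ F₂ e1 e2 e3 a
    have hle : Algebra.adjoin ℂ ({R.g, R.x, R.y} : Set H) ≤ AlgHom.equalizer F₁ F₂ := by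
      apply Algebra.adjoin_le
      rintro z hz
      simp only [Set.mem_insert_iff, Set.mem_singleton_iff] at hz
      rcases hz with rfl | rfl | rfl
      · exact e1
      · exact e2
      · exact e3
    have ha : a ∈ Algebra.adjoin ℂ ({R.g, R.x, R.y} : Set H) := by
      rw [R.gen]; exact Algebra.mem_top
    exact (AlgHom.mem_equalizer F₁ F₂ a).mp (hle ha)
  have keyEqC : ∀ (F₁ F₂ : H →ₐ[ℂ] ℂ), F₁ R.g = F₂ R.g → F₁ R.x = F₂ R.x →
      F₁ R.y = F₂ R.y → ∀ a, F₁ a = F₂ a := by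
    intro F₁ F₂ e1 e2 e3 a
    have hle : Algebra.adjoin ℂ ({R.g, R.x, R.y} : Set H) ≤ AlgHom.equalizer F₁ F₂ := by
      apply Algebra.adjoin_le
      rintro z hz
      simp only [Set.mem_insert_iff, Set.mem_singleton_iff] at hz
      rcases hz with rfl | rfl | rfl
      · exact e1
      · exact e2
      · exact e3
    have ha : a ∈ Algebra.adjoin ℂ ({R.g, R.x, R.y} : Set H) := by
      rw [R.gen]; exact Algebra.mem_top
    exact (AlgHom.mem_equalizer F₁ F₂ a).mp (hle ha)
  -- counit compatibility
  have hcounit : ∀ a : H, Coalgebra.counit (R := ℂ) (φl a) = Coalgebra.counit (R := ℂ) a := by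
    have := keyEqC ((Bialgebra.counitAlgHom ℂ H).comp Aφ) (Bialgebra.counitAlgHom ℂ H)
      (by simp [hAφ, hg])
      (by simp [hAφ, hx, R.counit_x])
      (by simp [hAφ, hy, R.counit_y])
    intro a
    simpa [hAφ] using this a
  -- comul compatibility
  have hcomul : ∀ a : H, Coalgebra.comul (R := ℂ) (φl a) =
      TensorProduct.map φl φl (Coalgebra.comul (R := ℂ) a) := by
    have hmap : ∀ u : H ⊗[ℂ] H, Algebra.TensorProduct.map Aφ Aφ u =
        TensorProduct.map φl φl u := by
      intro u
      induction u with
      | zero => simp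
      | tmul a b => simp [hAφ]
      | add u v hu hv => simp [hu, hv]
    have hkey := keyEq ((Bialgebra.comulAlgHom ℂ H).comp Aφ)
      ((Algebra.TensorProduct.map Aφ Aφ).comp (Bialgebra.comulAlgHom ℂ H))
      (by simp [AlgHom.comp_apply, Bialgebra.comulAlgHom_apply, hAφ, hg, R.comul_g,
            Algebra.TensorProduct.map_tmul])
      (by
        simp [AlgHom.comp_apply, Bialgebra.comulAlgHom_apply, hAφ, hx, hg, hone,
          map_smul, R.comul_x, Algebra.TensorProduct.map_tmul, smul_add,
          smul_tmul', tmul_smul])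
      (by
        simp [AlgHom.comp_apply, Bialgebra.comulAlgHom_apply, hAφ, hy, hg, hone,
          map_smul, R.comul_y, Algebra.TensorProduct.map_tmul, smul_add,
          smul_tmul', tmul_smul])
    intro a
    have := hkey a
    simpa [hAφ, hmap] using this
  -- assemble the bialgebra equivalence
  refine ⟨{ toLinearMap := φl
            counit_comp := by ext a; exact hcounit a
            map_comp_comul := by ext a; exact (hcomul a).symm
            invFun := ψl
            left_inv := fun a => LinearMap.congr_fun hψφ a
            right_inv := fun a => LinearMap.congr_fun hφψ a
            map_mul' := hmul }, hg, hx, hy⟩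
end
end
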